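/- arXiv:1412.7426 — 7 statements merged into one kernel-verified Lean document; each statement's English description precedes it below -/
import Mathlib

section
/- (Agmon's inequality on (0,1).) For every continuously differentiable function u : [0,1] → ℝ with u(0) = u(1) = 0 one has sup_{ξ∈[0,1]} u(ξ)² ≤ ‖u‖_{L²} ‖u'‖_{L²}. -/
open MeasureTheory Set intervalIntegral

/-- **Agmon's inequality on (0,1).** For every continuously differentiable
function `u : [0,1] → ℝ` with `u 0 = u 1 = 0` one has
`sup_{ξ ∈ [0,1]} u ξ ^ 2 ≤ ‖u‖_{L²} ‖u'‖_{L²}`. -/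
theorem agmon_inequality (u u' : ℝ → ℝ)
    (hderiv : ∀ x ∈ Icc (0:ℝ) 1, HasDerivWithinAt u (u' x) (Icc (0:ℝ) 1) x)
    (hcont : ContinuousOn u' (Icc (0:ℝ) 1))
    (h0 : u 0 = 0) (h1 : u 1 = 0) :
    ∀ ξ ∈ Icc (0:ℝ) 1,
      u ξ ^ 2 ≤ Real.sqrt (∫ x in (0:ℝ)..1, u x ^ 2) *
        Real.sqrt (∫ x in (0:ℝ)..1, u' x ^ 2) := by
  intro ξ hξ
  have hucont : ContinuousOn u (Icc (0:ℝ) 1) :=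
    fun x hx => (hderiv x hx).continuousWithinAt
  set A : ℝ := ∫ x in (0:ℝ)..1, u x ^ 2 with hA
  set C : ℝ := ∫ x in (0:ℝ)..1, u' x ^ 2 with hC
  set B : ℝ := ∫ x in (0:ℝ)..1, |u x| * |u' x| with hB
  -- basic integrability facts
  have hsub : ∀ a b : ℝ, a ∈ Icc (0:ℝ) 1 → b ∈ Icc (0:ℝ) 1 →
      uIcc a b ⊆ Icc (0:ℝ) 1 := by
    intro a b ha hb
    exact uIcc_subset_Icc ha hb
  have hu2int : ∀ a b : ℝ, a ∈ Icc (0:ℝ) 1 → b ∈ Icc (0:ℝ) 1 →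
      IntervalIntegrable (fun x => u x ^ 2) volume a b := by
    intro a b ha hb
    exact (((hucont.mono (hsub a b ha hb)).pow 2)).intervalIntegrable
  have hu'int : ∀ a b : ℝ, a ∈ Icc (0:ℝ) 1 → b ∈ Icc (0:ℝ) 1 →
      IntervalIntegrable (fun x => u' x ^ 2) volume a b := by
    intro a b ha hb
    exact (((hcont.mono (hsub a b ha hb)).pow 2)).intervalIntegrable
  have huu'cont : ContinuousOn (fun x => u x * u' x) (Icc (0:ℝ) 1) := hucont.mul hcont
  have habscont : ContinuousOn (fun x => |u x| * |u' x|) (Icc (0:ℝ) 1) :=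
    hucont.abs.mul hcont.abs
  have huu'int : ∀ a b : ℝ, a ∈ Icc (0:ℝ) 1 → b ∈ Icc (0:ℝ) 1 →
      IntervalIntegrable (fun x => u x * u' x) volume a b := by
    intro a b ha hb
    exact (huu'cont.mono (hsub a b ha hb)).intervalIntegrable
  have habsint : ∀ a b : ℝ, a ∈ Icc (0:ℝ) 1 → b ∈ Icc (0:ℝ) 1 →
      IntervalIntegrable (fun x => |u x| * |u' x|) volume a b := by
    intro a b ha hb
    exact (habscont.mono (hsub a b ha hb)).intervalIntegrable
  have h01 : (0:ℝ) ∈ Icc (0:ℝ) 1 := by norm_num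
  have h11 : (1:ℝ) ∈ Icc (0:ℝ) 1 := by norm_num
  -- Step 1 : u ξ ^ 2 ≤ B
  have hstep1 : u ξ ^ 2 ≤ B := by
    -- FTC on [0, ξ] and [ξ, 1] for u^2
    have hftc : ∀ a b : ℝ, a ∈ Icc (0:ℝ) 1 → b ∈ Icc (0:ℝ) 1 → a ≤ b →
        (∫ x in a..b, 2 * (u x * u' x)) = u b ^ 2 - u a ^ 2 := by
      intro a b ha hb hab
      apply integral_eq_sub_of_hasDeriv_right_of_le hab
      · exact (hucont.mono (Icc_subset_Icc ha.1 hb.2)).pow 2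
      · intro x hx
        have hx' : x ∈ Icc (0:ℝ) 1 := ⟨ha.1.trans hx.1.le, hx.2.le.trans hb.2⟩
        have := ((hderiv x hx').pow 2).mono_of_mem_nhdsWithin
          (Icc_mem_nhdsGT_of_mem ⟨hx'.1, lt_of_lt_of_le hx.2 hb.2⟩)
        convert this using 1
        · rfl
        · push_cast; ring
      · exact (huu'int a b ha hb).const_mul 2
    have e1 : (∫ x in (0:ℝ)..ξ, 2 * (u x * u' x)) = u ξ ^ 2 := by
      rw [hftc 0 ξ h01 hξ hξ.1, h0]; ring
    have e2 : (∫ x in ξ..1, 2 * (u x * u' x)) = - u ξ ^ 2 := by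
      rw [hftc ξ 1 hξ h11 hξ.2, h1]; ring
    have bound1 : (∫ x in (0:ℝ)..ξ, 2 * (u x * u' x)) ≤
        ∫ x in (0:ℝ)..ξ, 2 * (|u x| * |u' x|) := by
      apply integral_mono_on hξ.1 ((huu'int 0 ξ h01 hξ).const_mul 2)
        ((habsint 0 ξ h01 hξ).const_mul 2)
      intro x _
      have : u x * u' x ≤ |u x * u' x| := le_abs_self _
      rw [abs_mul] at this
      linarith
    have hnegint : IntervalIntegrable (fun x => -(2 * (u x * u' x))) volume ξ 1 :=
      (((continuousOn_const.mul huu'cont).neg).mono (hsub ξ 1 hξ h11)).intervalIntegrable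
    have bound2 : (∫ x in ξ..1, -(2 * (u x * u' x))) ≤
        ∫ x in ξ..1, 2 * (|u x| * |u' x|) := by
      apply integral_mono_on hξ.2 hnegint ((habsint ξ 1 hξ h11).const_mul 2)
      intro x _
      have : -(u x * u' x) ≤ |u x * u' x| := neg_le_abs _
      rw [abs_mul] at this
      linarith
    have hsplit : (∫ x in (0:ℝ)..ξ, 2 * (|u x| * |u' x|)) +
        (∫ x in ξ..1, 2 * (|u x| * |u' x|)) = ∫ x in (0:ℝ)..1, 2 * (|u x| * |u' x|) :=
      integral_add_adjacent_intervals ((habsint 0 ξ h01 hξ).const_mul 2)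
        ((habsint ξ 1 hξ h11).const_mul 2)
    have htot : (∫ x in (0:ℝ)..1, 2 * (|u x| * |u' x|)) = 2 * B := by
      rw [hB, ← intervalIntegral.integral_const_mul]
    have hneg : (∫ x in ξ..1, -(2 * (u x * u' x))) = u ξ ^ 2 := by
      rw [intervalIntegral.integral_neg, e2]; ring
    nlinarith [bound1, bound2, hsplit, htot, e1, hneg]
  -- Step 2 : Cauchy–Schwarz, B ≤ √A * √C
  have hAnn : 0 ≤ A := by
    apply integral_nonneg (by norm_num : (0:ℝ) ≤ 1)
    intro x _; positivity
  have hCnn : 0 ≤ C := by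
    apply integral_nonneg (by norm_num : (0:ℝ) ≤ 1)
    intro x _; positivity
  have hBnn : 0 ≤ B := by
    apply integral_nonneg (by norm_num : (0:ℝ) ≤ 1)
    intro x _; positivity
  have hquad : ∀ t : ℝ, 0 ≤ C * t ^ 2 + (-(2 * B)) * t + A := by
    intro t
    have hnn : 0 ≤ ∫ x in (0:ℝ)..1, (t * |u' x| - |u x|) ^ 2 := by
      apply integral_nonneg (by norm_num : (0:ℝ) ≤ 1)
      intro x _; positivity
    have hexp : (∫ x in (0:ℝ)..1, (t * |u' x| - |u x|) ^ 2) =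
        C * t ^ 2 + (-(2 * B)) * t + A := by
      have : ∀ x : ℝ, (t * |u' x| - |u x|) ^ 2 =
          t ^ 2 * u' x ^ 2 - (2 * t) * (|u x| * |u' x|) + u x ^ 2 := by
        intro x
        have h1 : |u' x| ^ 2 = u' x ^ 2 := sq_abs _
        have h2 : |u x| ^ 2 = u x ^ 2 := sq_abs _
        nlinarith [h1, h2]
      simp_rw [this]
      rw [integral_add (((hu'int 0 1 h01 h11).const_mul (t ^ 2)).sub
            ((habsint 0 1 h01 h11).const_mul (2 * t))) (hu2int 0 1 h01 h11),
          integral_sub ((hu'int 0 1 h01 h11).const_mul (t ^ 2))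
            ((habsint 0 1 h01 h11).const_mul (2 * t)),
          intervalIntegral.integral_const_mul, intervalIntegral.integral_const_mul]
      rw [hA, hB, hC]; ring
    rw [hexp] at hnn; exact hnn
  have hdisc : discrim C (-(2 * B)) A ≤ 0 :=
    discrim_le_zero (fun t => by nlinarith [hquad t])
  have hBsq : B ^ 2 ≤ A * C := by
    rw [discrim] at hdisc
    nlinarith [hdisc]
  calc u ξ ^ 2 ≤ B := hstep1
    _ = Real.sqrt (B ^ 2) := (Real.sqrt_sq hBnn).symm
    _ ≤ Real.sqrt (A * C) := Real.sqrt_le_sqrt hBsq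
    _ = Real.sqrt A * Real.sqrt C := Real.sqrt_mul hAnn _
end

section
/- (L⁴–L² interpolation on (0,1).) For every continuously differentiable function u : [0,1] → ℝ with u(0) = u(1) = 0 one has ∫₀¹ u(ξ)⁴ dξ ≤ ‖u‖_{L²}³ ‖u'‖_{L²}. -/
open MeasureTheory Set intervalIntegral

/-- **L⁴–L² interpolation on (0,1).** For every continuously differentiable
function `u : [0,1] → ℝ` with `u 0 = u 1 = 0` one has
`∫₀¹ u⁴ ≤ ‖u‖_{L²}³ ‖u'‖_{L²}`. -/
theorem L4_L2_interpolation (u u' : ℝ → ℝ)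
    (hderiv : ∀ x ∈ Icc (0:ℝ) 1, HasDerivWithinAt u (u' x) (Icc (0:ℝ) 1) x)
    (hcont : ContinuousOn u' (Icc (0:ℝ) 1))
    (h0 : u 0 = 0) (h1 : u 1 = 0) :
    (∫ x in (0:ℝ)..1, u x ^ 4) ≤
      Real.sqrt (∫ x in (0:ℝ)..1, u x ^ 2) ^ 3 *
        Real.sqrt (∫ x in (0:ℝ)..1, u' x ^ 2) := by
  have hu : ContinuousOn u (Icc (0:ℝ) 1) := fun x hx => (hderiv x hx).continuousWithinAt
  set g : ℝ → ℝ := fun t => 2 * u t * u' t with hg_def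
  have hgc : ContinuousOn g (Icc (0:ℝ) 1) := (continuousOn_const.mul hu).mul hcont
  -- interval integrability of g on subintervals of [0,1]
  have hgint : ∀ a b : ℝ, a ∈ Icc (0:ℝ) 1 → b ∈ Icc (0:ℝ) 1 → a ≤ b →
      IntervalIntegrable g volume a b := by
    intro a b ha hb hab
    exact (hgc.mono (Icc_subset_Icc ha.1 hb.2)).intervalIntegrable_of_Icc hab
  -- FTC on subintervals
  have hftc : ∀ a b : ℝ, a ∈ Icc (0:ℝ) 1 → b ∈ Icc (0:ℝ) 1 → a ≤ b →
      ∫ t in a..b, g t = u b ^ 2 - u a ^ 2 := by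
    intro a b ha hb hab
    refine integral_eq_sub_of_hasDeriv_right_of_le hab
      ((hu.mono (Icc_subset_Icc ha.1 hb.2)).pow 2) (fun x hx => ?_) (hgint a b ha hb hab)
    have hx01 : x ∈ Ioo (0:ℝ) 1 := ⟨lt_of_le_of_lt ha.1 hx.1, lt_of_lt_of_le hx.2 hb.2⟩
    have h := (hderiv x (Ioo_subset_Icc_self hx01)).hasDerivAt
      (Icc_mem_nhds hx01.1 hx01.2)
    have h2 : HasDerivAt (fun t => u t ^ 2) (g x) x := by
      have := h.fun_pow 2
      simp only [Nat.cast_ofNat, pow_one] at this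
      refine this.congr_deriv ?_
      show _ = 2 * u x * u' x
      norm_num
    exact h2.hasDerivWithinAt
  set C : ℝ := ∫ t in (0:ℝ)..1, |u t * u' t| with hC_def
  have habs_int : ∀ a b : ℝ, a ∈ Icc (0:ℝ) 1 → b ∈ Icc (0:ℝ) 1 → a ≤ b →
      IntervalIntegrable (fun t => |u t * u' t|) volume a b := by
    intro a b ha hb hab
    exact (((hu.mul hcont).abs).mono (Icc_subset_Icc ha.1 hb.2)).intervalIntegrable_of_Icc hab
  -- key pointwise bound : u x ^ 2 ≤ C
  have key : ∀ x ∈ Icc (0:ℝ) 1, u x ^ 2 ≤ C := by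
    intro x hx
    have h0x : (0:ℝ) ∈ Icc (0:ℝ) 1 := by norm_num
    have h1x : (1:ℝ) ∈ Icc (0:ℝ) 1 := by norm_num
    have e1 : ∫ t in (0:ℝ)..x, g t = u x ^ 2 := by
      rw [hftc 0 x h0x hx hx.1, h0]; ring
    have e2 : ∫ t in x..(1:ℝ), g t = - u x ^ 2 := by
      rw [hftc x 1 hx h1x hx.2, h1]; ring
    have b1 : |∫ t in (0:ℝ)..x, g t| ≤ ∫ t in (0:ℝ)..x, |g t| :=
      intervalIntegral.abs_integral_le_integral_abs hx.1
    have b2 : |∫ t in x..(1:ℝ), g t| ≤ ∫ t in x..(1:ℝ), |g t| :=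
      intervalIntegral.abs_integral_le_integral_abs hx.2
    have hgabs : ∀ a b : ℝ, a ∈ Icc (0:ℝ) 1 → b ∈ Icc (0:ℝ) 1 → a ≤ b →
        IntervalIntegrable (fun t => |g t|) volume a b := fun a b ha hb hab =>
      ((hgc.abs).mono (Icc_subset_Icc ha.1 hb.2)).intervalIntegrable_of_Icc hab
    have badd : (∫ t in (0:ℝ)..x, |g t|) + ∫ t in x..(1:ℝ), |g t| = ∫ t in (0:ℝ)..1, |g t| :=
      intervalIntegral.integral_add_adjacent_intervals (hgabs 0 x h0x hx hx.1)
        (hgabs x 1 hx h1x hx.2)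
    have hCg : (∫ t in (0:ℝ)..1, |g t|) = 2 * C := by
      rw [hC_def, ← intervalIntegral.integral_const_mul]
      apply intervalIntegral.integral_congr
      intro t _
      simp [hg_def, abs_mul, mul_assoc]
    have habs1 : |∫ t in (0:ℝ)..x, g t| = u x ^ 2 := by rw [e1]; exact abs_of_nonneg (sq_nonneg _)
    have habs2 : |∫ t in x..(1:ℝ), g t| = u x ^ 2 := by rw [e2, abs_neg]; exact abs_of_nonneg (sq_nonneg _)
    nlinarith [b1, b2, badd, hCg, habs1, habs2]
  -- integrability of powers
  have hint2 : IntervalIntegrable (fun x => u x ^ 2) volume 0 1 :=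
    (hu.pow 2).intervalIntegrable_of_Icc zero_le_one
  have hint4 : IntervalIntegrable (fun x => u x ^ 4) volume 0 1 :=
    (hu.pow 4).intervalIntegrable_of_Icc zero_le_one
  set A : ℝ := ∫ x in (0:ℝ)..1, u x ^ 2 with hA_def
  set B : ℝ := ∫ x in (0:ℝ)..1, u' x ^ 2 with hB_def
  have hA_nonneg : 0 ≤ A :=
    intervalIntegral.integral_nonneg zero_le_one (fun x _ => sq_nonneg _)
  -- step 1 : ∫ u⁴ ≤ C * A
  have step1 : (∫ x in (0:ℝ)..1, u x ^ 4) ≤ C * A := by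
    have h1' : (∫ x in (0:ℝ)..1, u x ^ 4) ≤ ∫ x in (0:ℝ)..1, C * u x ^ 2 := by
      apply intervalIntegral.integral_mono_on zero_le_one hint4 (hint2.const_mul C)
      intro x hx
      have h2 := key x hx
      nlinarith [sq_nonneg (u x)]
    rwa [intervalIntegral.integral_const_mul] at h1'
  -- step 2 : Cauchy–Schwarz : C ≤ sqrt A * sqrt B
  have step2 : C ≤ Real.sqrt A * Real.sqrt B := by
    have hmeas : MeasurableSet (Ioc (0:ℝ) 1) := measurableSet_Ioc
    set μ := volume.restrict (Ioc (0:ℝ) 1) with hμ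
    haveI : IsFiniteMeasure μ := by
      constructor
      rw [hμ, Measure.restrict_apply_univ]
      simp
    have hmem : ∀ v : ℝ → ℝ, ContinuousOn v (Icc (0:ℝ) 1) →
        MemLp (fun x => |v x|) (ENNReal.ofReal 2) μ := by
      intro v hv
      obtain ⟨M, hM⟩ := (isCompact_Icc).exists_bound_of_continuousOn hv
      refine MemLp.of_bound ((hv.abs.mono Ioc_subset_Icc_self).aestronglyMeasurable hmeas) M ?_
      filter_upwards [ae_restrict_mem hmeas] with x hx
      simpa [abs_abs] using hM x (Ioc_subset_Icc_self hx)
    have hpq : Real.HolderConjugate 2 2 := Real.HolderConjugate.two_two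
    have hCS := integral_mul_le_Lp_mul_Lq_of_nonneg (μ := μ) hpq
      (Filter.Eventually.of_forall (fun x => abs_nonneg (u x)))
      (Filter.Eventually.of_forall (fun x => abs_nonneg (u' x)))
      (hmem u hu) (hmem u' hcont)
    have hrw : ∀ w : ℝ → ℝ, (∫ a, |w a| ^ (2:ℝ) ∂μ) = ∫ a, w a ^ 2 ∂μ := by
      intro w
      apply MeasureTheory.integral_congr_ae
      filter_upwards with x
      rw [show ((2:ℝ) = ((2:ℕ):ℝ)) by norm_num, Real.rpow_natCast, sq_abs]
    rw [hrw, hrw] at hCS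
    have hCeq : C = ∫ a, |u a| * |u' a| ∂μ := by
      rw [hC_def, intervalIntegral.integral_of_le zero_le_one]
      simp [abs_mul, hμ]
    have hAeq : A = ∫ a, u a ^ 2 ∂μ := by
      rw [hA_def, intervalIntegral.integral_of_le zero_le_one]
    have hBeq : B = ∫ a, u' a ^ 2 ∂μ := by
      rw [hB_def, intervalIntegral.integral_of_le zero_le_one]
    rw [hCeq, hAeq, hBeq]
    calc (∫ a, |u a| * |u' a| ∂μ)
        ≤ (∫ a, u a ^ 2 ∂μ) ^ ((1:ℝ)/2) * (∫ a, u' a ^ 2 ∂μ) ^ ((1:ℝ)/2) := hCS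
      _ = Real.sqrt (∫ a, u a ^ 2 ∂μ) * Real.sqrt (∫ a, u' a ^ 2 ∂μ) := by
          rw [Real.sqrt_eq_rpow, Real.sqrt_eq_rpow]
  -- combine
  calc (∫ x in (0:ℝ)..1, u x ^ 4) ≤ C * A := step1
    _ ≤ (Real.sqrt A * Real.sqrt B) * A :=
        mul_le_mul_of_nonneg_right step2 hA_nonneg
    _ = Real.sqrt A ^ 3 * Real.sqrt B := by
        rw [pow_succ, Real.sq_sqrt hA_nonneg]; ring
end

section
/- (Key trilinear estimate for the Burgers nonlinearity.) There exists a constant C > 0 such that for every continuous u : [0,1] → ℝ, every continuously differentiable v : [0,1] → ℝ with v(0) = v(1) = 0, and every ε > 0, one has |∫₀¹ u(ξ) v(ξ) v'(ξ) dξ| ≤ ε ‖v'‖_{L²}² + C ε^{-5/3} ‖u‖_{L⁴}^{8/3} ‖v‖_{L²}². -/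
open MeasureTheory Set intervalIntegral

open Filter
open scoped ENNReal

section aux
lemma memLp_aux' {f : ℝ → ℝ} (hf : ContinuousOn f (Icc (0:ℝ) 1)) (p : ℝ≥0∞) :
    MemLp f p (volume.restrict (Ioc (0:ℝ) 1)) := by
  obtain ⟨M, hM⟩ := isCompact_Icc.exists_bound_of_continuousOn hf
  have : IsFiniteMeasure (volume.restrict (Ioc (0:ℝ) 1)) :=
    ⟨by simp [Measure.restrict_apply_univ]⟩
  refine MemLp.of_bound ?_ M ?_
  · exact (hf.aestronglyMeasurable measurableSet_Icc).mono_measure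
      (Measure.restrict_mono Ioc_subset_Icc_self le_rfl)
  · filter_upwards [ae_restrict_mem measurableSet_Ioc] with x hx
    exact hM x (Ioc_subset_Icc_self hx)

lemma cs_aux' {f g : ℝ → ℝ} (hf : ContinuousOn f (Icc (0:ℝ) 1))
    (hg : ContinuousOn g (Icc (0:ℝ) 1)) :
    ∫ x in (0:ℝ)..1, |f x| * |g x| ≤
      (∫ x in (0:ℝ)..1, f x ^ 2) ^ ((1:ℝ)/2) * (∫ x in (0:ℝ)..1, g x ^ 2) ^ ((1:ℝ)/2) := by
  have h22 : ((2:ℝ)).HolderConjugate 2 := Real.HolderConjugate.two_two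
  have key := integral_mul_le_Lp_mul_Lq_of_nonneg h22
    (μ := volume.restrict (Ioc (0:ℝ) 1)) (f := fun x => |f x|) (g := fun x => |g x|)
    (Eventually.of_forall fun x => abs_nonneg _) (Eventually.of_forall fun x => abs_nonneg _)
    ((memLp_aux' hf _).abs) ((memLp_aux' hg _).abs)
  simp only [intervalIntegral.integral_of_le (zero_le_one (α := ℝ))]
  have habs : ∀ (h : ℝ → ℝ) (x : ℝ), |h x| ^ (2:ℝ) = h x ^ 2 := by
    intro h x
    rw [show (2:ℝ) = ((2:ℕ):ℝ) by norm_num, Real.rpow_natCast, sq_abs]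
  simp only [habs] at key
  exact key

lemma ii_aux' {f : ℝ → ℝ} (hf : ContinuousOn f (Icc (0:ℝ) 1)) :
    IntervalIntegrable f volume 0 1 := by
  apply ContinuousOn.intervalIntegrable; rwa [uIcc_of_le zero_le_one]

lemma sup_aux' {v v' : ℝ → ℝ}
    (hv : ∀ x ∈ Icc (0:ℝ) 1, HasDerivWithinAt v (v' x) (Icc (0:ℝ) 1) x)
    (hv' : ContinuousOn v' (Icc (0:ℝ) 1)) (h0 : v 0 = 0) {x : ℝ} (hx : x ∈ Icc (0:ℝ) 1) :
    v x ^ 2 ≤ 2 * ∫ s in (0:ℝ)..1, |v s| * |v' s| := by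
  have hvc : ContinuousOn v (Icc (0:ℝ) 1) := fun y hy => (hv y hy).continuousWithinAt
  have hcont2 : ContinuousOn (fun s => 2 * v s * v' s) (Icc (0:ℝ) 1) :=
    (continuousOn_const.mul hvc).mul hv'
  have habs2 : ContinuousOn (fun s => 2 * (|v s| * |v' s|)) (Icc (0:ℝ) 1) :=
    continuousOn_const.mul (hvc.abs.mul hv'.abs)
  have hsub : uIcc (0:ℝ) x ⊆ uIcc (0:ℝ) 1 := by
    rw [uIcc_of_le hx.1, uIcc_of_le zero_le_one]; exact Icc_subset_Icc le_rfl hx.2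
  have hftc : ∫ s in (0:ℝ)..x, 2 * v s * v' s = v x ^ 2 - v 0 ^ 2 := by
    apply integral_eq_sub_of_hasDeriv_right_of_le hx.1
    · exact (hvc.mono (Icc_subset_Icc le_rfl hx.2)).pow 2
    · intro s hs
      have hs1 : s ∈ Icc (0:ℝ) 1 := ⟨hs.1.le, (hs.2.trans_le hx.2).le⟩
      have hd : HasDerivAt v (v' s) s :=
        (hv s hs1).hasDerivAt (Icc_mem_nhds hs.1 (lt_of_lt_of_le hs.2 hx.2))
      simpa using (hd.fun_pow 2).hasDerivWithinAt
    · exact (ii_aux' hcont2).mono_set hsub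
  have step1 : (∫ s in (0:ℝ)..x, 2 * v s * v' s)
      ≤ ∫ s in (0:ℝ)..x, 2 * (|v s| * |v' s|) := by
    apply intervalIntegral.integral_mono_on hx.1 ((ii_aux' hcont2).mono_set hsub)
      ((ii_aux' habs2).mono_set hsub)
    intro s _
    calc 2 * v s * v' s ≤ |2 * v s * v' s| := le_abs_self _
      _ = 2 * (|v s| * |v' s|) := by rw [abs_mul, abs_mul, abs_two]; ring
  have step2 : (∫ s in (0:ℝ)..x, 2 * (|v s| * |v' s|))
      ≤ ∫ s in (0:ℝ)..1, 2 * (|v s| * |v' s|) := by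
    apply intervalIntegral.integral_mono_interval le_rfl hx.1 hx.2
    · exact Eventually.of_forall fun s => by positivity
    · exact ii_aux' habs2
  have hconst : (∫ s in (0:ℝ)..1, 2 * (|v s| * |v' s|))
      = 2 * ∫ s in (0:ℝ)..1, |v s| * |v' s| := intervalIntegral.integral_const_mul _ _
  have h : v x ^ 2 - v 0 ^ 2 ≤ 2 * ∫ s in (0:ℝ)..1, |v s| * |v' s| := by
    rw [← hftc, ← hconst]; exact step1.trans step2
  rw [h0] at h; simpa using h

lemma pow_rpow_aux' {a : ℝ} (ha : 0 ≤ a) (n : ℕ) (r : ℝ) (m : ℕ) (h : (n:ℝ) * r = m) :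
    (a ^ n) ^ r = a ^ m := by
  rw [← Real.rpow_natCast a n, ← Real.rpow_mul ha, h, Real.rpow_natCast]

lemma pow_rpow_neg_aux' {a : ℝ} (ha : 0 ≤ a) (n : ℕ) (r : ℝ) (m : ℕ) (h : (n:ℝ) * r = -(m:ℝ)) :
    (a ^ n) ^ r = (a ^ m)⁻¹ := by
  rw [← Real.rpow_natCast a n, ← Real.rpow_mul ha, h, Real.rpow_neg ha, Real.rpow_natCast]

lemma rpow_pow_aux' {a : ℝ} (ha : 0 ≤ a) (r : ℝ) (n : ℕ) : (a ^ r) ^ n = a ^ (r * n) := by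
  rw [← Real.rpow_natCast (a ^ r) n, ← Real.rpow_mul ha]

lemma amgm_aux' {x y : ℝ} (hx : 0 ≤ x) (hy : 0 ≤ y) :
    x ^ 5 * y ^ 3 ≤ (5 * x ^ 8 + 3 * y ^ 8) / 8 := by
  have h := Real.geom_mean_le_arith_mean2_weighted (by norm_num : (0:ℝ) ≤ 5/8)
    (by norm_num : (0:ℝ) ≤ 3/8) (pow_nonneg hx 8) (pow_nonneg hy 8) (by norm_num)
  rw [pow_rpow_aux' hx 8 (5/8) 5 (by norm_num), pow_rpow_aux' hy 8 (3/8) 3 (by norm_num)] at h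
  linarith

lemma final_num' {A B D ε : ℝ} (hA : 0 ≤ A) (hB : 0 ≤ B) (hD : 0 ≤ D) (hε : 0 < ε) :
    (B ^ ((1:ℝ)/2) * (2 * (D ^ ((1:ℝ)/2) * A ^ ((1:ℝ)/2)) * D) ^ ((1:ℝ)/2)) ^ ((1:ℝ)/2)
        * A ^ ((1:ℝ)/2)
      ≤ ε * A + 2 * ε ^ (-(5:ℝ)/3) * B ^ ((2:ℝ)/3) * D := by
  have ha : 0 ≤ A ^ ((1:ℝ)/8) := Real.rpow_nonneg hA _
  have hb : 0 ≤ B ^ ((1:ℝ)/12) := Real.rpow_nonneg hB _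
  have hd : 0 ≤ D ^ ((1:ℝ)/8) := Real.rpow_nonneg hD _
  have he : 0 < ε ^ ((1:ℝ)/3) := Real.rpow_pos_of_pos hε _
  have ht : 0 ≤ (2:ℝ) ^ ((1:ℝ)/12) := Real.rpow_nonneg (by norm_num) _
  have hA8 : A = (A ^ ((1:ℝ)/8)) ^ (8:ℕ) := by rw [rpow_pow_aux' hA]; norm_num
  have hB12 : B = (B ^ ((1:ℝ)/12)) ^ (12:ℕ) := by rw [rpow_pow_aux' hB]; norm_num
  have hD8 : D = (D ^ ((1:ℝ)/8)) ^ (8:ℕ) := by rw [rpow_pow_aux' hD]; norm_num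
  have hE3 : ε = (ε ^ ((1:ℝ)/3)) ^ (3:ℕ) := by rw [rpow_pow_aux' hε.le]; norm_num
  have hT12 : (2:ℝ) = ((2:ℝ) ^ ((1:ℝ)/12)) ^ (12:ℕ) := by
    rw [rpow_pow_aux' (by norm_num : (0:ℝ) ≤ 2)]; norm_num
  have ht8 : ((2:ℝ) ^ ((1:ℝ)/12)) ^ (8:ℕ) ≤ 2 := by
    rw [rpow_pow_aux' (by norm_num : (0:ℝ) ≤ 2)]
    calc (2:ℝ) ^ ((1:ℝ)/12 * 8) ≤ 2 ^ (1:ℝ) :=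
          Real.rpow_le_rpow_of_exponent_le one_le_two (by norm_num)
      _ = 2 := Real.rpow_one 2
  set a := A ^ ((1:ℝ)/8)
  set b := B ^ ((1:ℝ)/12)
  set d := D ^ ((1:ℝ)/8)
  set e := ε ^ ((1:ℝ)/3)
  set t := (2:ℝ) ^ ((1:ℝ)/12)
  rw [hA8, hB12, hD8, hE3]
  rw [pow_rpow_aux' hb 12 ((1:ℝ)/2) 6 (by norm_num),
      pow_rpow_aux' hd 8 ((1:ℝ)/2) 4 (by norm_num),
      pow_rpow_aux' ha 8 ((1:ℝ)/2) 4 (by norm_num),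
      pow_rpow_aux' hb 12 ((2:ℝ)/3) 8 (by norm_num),
      pow_rpow_neg_aux' he.le 3 (-(5:ℝ)/3) 5 (by norm_num)]
  have h1 : 2 * (d ^ (4:ℕ) * a ^ (4:ℕ)) * d ^ (8:ℕ)
      = (t ^ 6 * d ^ 6 * a ^ 2) ^ (2:ℕ) := by rw [hT12]; ring
  rw [h1, pow_rpow_aux' (by positivity) 2 ((1:ℝ)/2) 1 (by norm_num), pow_one]
  have h2 : b ^ (6:ℕ) * (t ^ 6 * d ^ 6 * a ^ 2) = (b ^ 3 * t ^ 3 * d ^ 3 * a) ^ (2:ℕ) := by ring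
  rw [h2, pow_rpow_aux' (by positivity) 2 ((1:ℝ)/2) 1 (by norm_num), pow_one]
  have h5 : (0:ℝ) < e ^ 5 := by positivity
  rw [← mul_le_mul_iff_of_pos_right h5]
  have hinv : (e ^ 5)⁻¹ * e ^ 5 = 1 := inv_mul_cancel₀ (ne_of_gt h5)
  have hR : (e ^ (3:ℕ) * a ^ (8:ℕ) + 2 * (e ^ 5)⁻¹ * b ^ (8:ℕ) * d ^ (8:ℕ)) * e ^ 5
      = e ^ 8 * a ^ 8 + 2 * b ^ 8 * d ^ 8 * ((e ^ 5)⁻¹ * e ^ 5) := by ring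
  rw [hR, hinv, mul_one]
  have key := amgm_aux' (mul_nonneg he.le ha) (mul_nonneg (mul_nonneg ht hb) hd)
  have htb : t ^ 8 * (b * d) ^ 8 ≤ 2 * (b * d) ^ 8 :=
    mul_le_mul_of_nonneg_right ht8 (by positivity)
  nlinarith [key, htb, mul_nonneg (pow_nonneg he.le 8) (pow_nonneg ha 8),
    mul_nonneg (pow_nonneg hb 8) (pow_nonneg hd 8)]
end aux

/-- **Key trilinear estimate for the Burgers nonlinearity.** There is a constant
`C > 0` such that for every continuous `u`, every `C¹` function `v` vanishing at
the endpoints of `[0,1]`, and every `ε > 0`,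
`|∫₀¹ u v v'| ≤ ε ‖v'‖_{L²}² + C ε^{-5/3} ‖u‖_{L⁴}^{8/3} ‖v‖_{L²}²`. -/
theorem trilinear_estimate :
    ∃ C : ℝ, 0 < C ∧
      ∀ (u v v' : ℝ → ℝ),
        ContinuousOn u (Icc (0:ℝ) 1) →
        (∀ x ∈ Icc (0:ℝ) 1, HasDerivWithinAt v (v' x) (Icc (0:ℝ) 1) x) →
        ContinuousOn v' (Icc (0:ℝ) 1) →
        v 0 = 0 → v 1 = 0 →
        ∀ ε : ℝ, 0 < ε →
          |∫ x in (0:ℝ)..1, u x * v x * v' x| ≤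
            ε * (∫ x in (0:ℝ)..1, v' x ^ 2) +
              C * ε ^ (-(5:ℝ)/3) * (∫ x in (0:ℝ)..1, u x ^ 4) ^ ((2:ℝ)/3) *
                (∫ x in (0:ℝ)..1, v x ^ 2) := by
  refine ⟨2, by norm_num, ?_⟩
  intro u v v' hu hv hv' h0 h1 ε hε
  have hvc : ContinuousOn v (Icc (0:ℝ) 1) := fun y hy => (hv y hy).continuousWithinAt
  set A := ∫ x in (0:ℝ)..1, v' x ^ 2 with hA_def
  set B := ∫ x in (0:ℝ)..1, u x ^ 4 with hB_def
  set D := ∫ x in (0:ℝ)..1, v x ^ 2 with hD_def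
  set K := ∫ x in (0:ℝ)..1, |v x| * |v' x| with hK_def
  have hA0 : 0 ≤ A := intervalIntegral.integral_nonneg zero_le_one fun x _ => sq_nonneg _
  have hB0 : 0 ≤ B := intervalIntegral.integral_nonneg zero_le_one fun x _ => by positivity
  have hD0 : 0 ≤ D := intervalIntegral.integral_nonneg zero_le_one fun x _ => sq_nonneg _
  have hK0 : 0 ≤ K := intervalIntegral.integral_nonneg zero_le_one fun x _ => by positivity
  have hK_le : K ≤ D ^ ((1:ℝ)/2) * A ^ ((1:ℝ)/2) := cs_aux' hvc hv'
  have hP0 : 0 ≤ ∫ x in (0:ℝ)..1, (v x ^ 2) ^ 2 :=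
    intervalIntegral.integral_nonneg zero_le_one fun x _ => sq_nonneg _
  have hE0 : 0 ≤ ∫ x in (0:ℝ)..1, (u x * v x) ^ 2 :=
    intervalIntegral.integral_nonneg zero_le_one fun x _ => sq_nonneg _
  have hP_le : (∫ x in (0:ℝ)..1, (v x ^ 2) ^ 2) ≤ 2 * (D ^ ((1:ℝ)/2) * A ^ ((1:ℝ)/2)) * D := by
    have step : (∫ x in (0:ℝ)..1, (v x ^ 2) ^ 2)
        ≤ ∫ x in (0:ℝ)..1, (2 * K) * v x ^ 2 := by
      apply intervalIntegral.integral_mono_on zero_le_one (ii_aux' ((hvc.pow 2).pow 2))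
        (ii_aux' (continuousOn_const.mul (hvc.pow 2)))
      intro x hx
      have hb := sup_aux' hv hv' h0 hx
      rw [← hK_def] at hb
      show (v x ^ 2) ^ 2 ≤ 2 * K * v x ^ 2
      nlinarith [sq_nonneg (v x)]
    rw [intervalIntegral.integral_const_mul] at step
    calc (∫ x in (0:ℝ)..1, (v x ^ 2) ^ 2) ≤ 2 * K * D := step
      _ ≤ 2 * (D ^ ((1:ℝ)/2) * A ^ ((1:ℝ)/2)) * D := by nlinarith
  have hE_le : (∫ x in (0:ℝ)..1, (u x * v x) ^ 2)
      ≤ B ^ ((1:ℝ)/2) * (∫ x in (0:ℝ)..1, (v x ^ 2) ^ 2) ^ ((1:ℝ)/2) := by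
    have hcs : (∫ x in (0:ℝ)..1, |u x ^ 2| * |v x ^ 2|)
        ≤ (∫ x in (0:ℝ)..1, (u x ^ 2) ^ 2) ^ ((1:ℝ)/2)
          * (∫ x in (0:ℝ)..1, (v x ^ 2) ^ 2) ^ ((1:ℝ)/2) := by
      simpa using cs_aux' (hu.pow 2) (hvc.pow 2)
    have e1 : (∫ x in (0:ℝ)..1, (u x * v x) ^ 2)
        = ∫ x in (0:ℝ)..1, |u x ^ 2| * |v x ^ 2| := by
      apply intervalIntegral.integral_congr
      intro x _
      show (u x * v x) ^ 2 = |u x ^ 2| * |v x ^ 2|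
      rw [abs_of_nonneg (sq_nonneg (u x)), abs_of_nonneg (sq_nonneg (v x))]; ring
    have e2 : (∫ x in (0:ℝ)..1, (u x ^ 2) ^ 2) = B := by
      rw [hB_def]; apply intervalIntegral.integral_congr; intro x _
      show (u x ^ 2) ^ 2 = u x ^ 4; ring
    rw [e1]
    calc (∫ x in (0:ℝ)..1, |u x ^ 2| * |v x ^ 2|)
        ≤ (∫ x in (0:ℝ)..1, (u x ^ 2) ^ 2) ^ ((1:ℝ)/2)
          * (∫ x in (0:ℝ)..1, (v x ^ 2) ^ 2) ^ ((1:ℝ)/2) := hcs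
      _ = B ^ ((1:ℝ)/2) * (∫ x in (0:ℝ)..1, (v x ^ 2) ^ 2) ^ ((1:ℝ)/2) := by rw [e2]
  have hI1 : |∫ x in (0:ℝ)..1, u x * v x * v' x|
      ≤ ∫ x in (0:ℝ)..1, |u x * v x| * |v' x| := by
    calc |∫ x in (0:ℝ)..1, u x * v x * v' x|
        ≤ ∫ x in (0:ℝ)..1, |u x * v x * v' x| :=
          intervalIntegral.abs_integral_le_integral_abs zero_le_one
      _ = ∫ x in (0:ℝ)..1, |u x * v x| * |v' x| :=
          intervalIntegral.integral_congr fun x _ => abs_mul _ _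
  have hI2 : (∫ x in (0:ℝ)..1, |u x * v x| * |v' x|)
      ≤ (∫ x in (0:ℝ)..1, (u x * v x) ^ 2) ^ ((1:ℝ)/2) * A ^ ((1:ℝ)/2) := by
    simpa using cs_aux' (hu.mul hvc) hv'
  have hmid : (∫ x in (0:ℝ)..1, (u x * v x) ^ 2)
      ≤ B ^ ((1:ℝ)/2) * (2 * (D ^ ((1:ℝ)/2) * A ^ ((1:ℝ)/2)) * D) ^ ((1:ℝ)/2) :=
    hE_le.trans (mul_le_mul_of_nonneg_left
      (Real.rpow_le_rpow hP0 hP_le (by norm_num)) (Real.rpow_nonneg hB0 _))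
  calc |∫ x in (0:ℝ)..1, u x * v x * v' x|
      ≤ (∫ x in (0:ℝ)..1, (u x * v x) ^ 2) ^ ((1:ℝ)/2) * A ^ ((1:ℝ)/2) := hI1.trans hI2
    _ ≤ (B ^ ((1:ℝ)/2) * (2 * (D ^ ((1:ℝ)/2) * A ^ ((1:ℝ)/2)) * D) ^ ((1:ℝ)/2)) ^ ((1:ℝ)/2)
          * A ^ ((1:ℝ)/2) :=
        mul_le_mul_of_nonneg_right (Real.rpow_le_rpow hE0 hmid (by norm_num))
          (Real.rpow_nonneg hA0 _)
    _ ≤ ε * A + 2 * ε ^ (-(5:ℝ)/3) * B ^ ((2:ℝ)/3) * D := final_num' hA0 hB0 hD0 hε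
end

section
/- (Energy differential inequality for the linearized Burgers equation.) There exists a constant c > 0 with the following property. Let T > 0, let X : [0,T] × [0,1] → ℝ be continuous with continuous partial derivative ∂_ξ X, and let η : [0,T] × [0,1] → ℝ be continuous with continuous partial derivatives ∂_t η, ∂_ξ η, ∂_ξ² η, satisfying η(t,0) = η(t,1) = 0 for all t ∈ [0,T] and the equation ∂_t η(t,ξ) = ∂_ξ² η(t,ξ) + 2 ∂_ξ( X(t,ξ) η(t,ξ) ) for all (t,ξ) ∈ [0,T] × [0,1]. Then for every t ∈ [0,T]: (d/dt) ‖η(t,·)‖_{L²}² ≤ - ‖∂_ξ η(t,·)‖_{L²}² + c ‖X(t,·)‖_{L⁴}^{8/3} ‖η(t,·)‖_{L²}². -/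
open MeasureTheory Set intervalIntegral

lemma myCS {f g : ℝ → ℝ} (hf : ContinuousOn f (Icc 0 1)) (hg : ContinuousOn g (Icc 0 1)) :
    ∫ x in (0:ℝ)..1, |f x| * |g x| ≤
      (∫ x in (0:ℝ)..1, f x ^ 2) ^ ((1:ℝ)/2) * (∫ x in (0:ℝ)..1, g x ^ 2) ^ ((1:ℝ)/2) := by
  have hsub : Ioc (0:ℝ) 1 ⊆ Icc 0 1 := Ioc_subset_Icc_self
  have hmeas : MeasurableSet (Ioc (0:ℝ) 1) := measurableSet_Ioc
  have hfin : IsFiniteMeasure (volume.restrict (Ioc (0:ℝ) 1)) := by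
    constructor
    simp [Measure.restrict_apply_univ]
  have hmem : ∀ {h : ℝ → ℝ}, ContinuousOn h (Icc 0 1) →
      MemLp (fun x => |h x|) (ENNReal.ofReal 2) (volume.restrict (Ioc (0:ℝ) 1)) := by
    intro h hh
    obtain ⟨C, hC⟩ := (isCompact_Icc (a := (0:ℝ)) (b := 1)).exists_bound_of_continuousOn hh
    refine MemLp.of_bound ((hh.mono hsub).aestronglyMeasurable hmeas).norm C ?_
    refine (ae_restrict_iff' hmeas).mpr (Filter.Eventually.of_forall fun x hx => ?_)
    simpa [abs_abs] using hC x (hsub hx)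
  have hpq : Real.HolderConjugate 2 2 := by constructor <;> norm_num
  have key := integral_mul_le_Lp_mul_Lq_of_nonneg (μ := volume.restrict (Ioc (0:ℝ) 1)) hpq
    (f := fun x => |f x|) (g := fun x => |g x|)
    (Filter.Eventually.of_forall fun x => abs_nonneg _)
    (Filter.Eventually.of_forall fun x => abs_nonneg _) (hmem hf) (hmem hg)
  rw [intervalIntegral.integral_of_le zero_le_one, intervalIntegral.integral_of_le zero_le_one,
    intervalIntegral.integral_of_le zero_le_one]
  have e1 : ∀ h : ℝ → ℝ, ∀ x : ℝ, |h x| ^ (2:ℝ) = h x ^ 2 := fun h x => by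
    rw [show ((2:ℝ)) = ((2:ℕ):ℝ) by norm_num, Real.rpow_natCast, sq_abs]
  simpa [e1] using key
lemma paramDeriv {T : ℝ} (f f' : ℝ → ℝ → ℝ)
    (hf' : ContinuousOn (fun p : ℝ × ℝ => f' p.1 p.2) (Icc 0 T ×ˢ Icc 0 1))
    (hd : ∀ t ∈ Icc (0:ℝ) T, ∀ x ∈ Icc (0:ℝ) 1,
      HasDerivWithinAt (fun s => f s x) (f' t x) (Icc 0 T) t)
    (hfc : ∀ s ∈ Icc (0:ℝ) T, ContinuousOn (fun x => f s x) (Icc 0 1))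
    {t : ℝ} (ht : t ∈ Icc (0:ℝ) T) :
    HasDerivWithinAt (fun s => ∫ x in (0:ℝ)..1, f s x) (∫ x in (0:ℝ)..1, f' t x)
      (Icc 0 T) t := by
  have huIcc : uIcc (0:ℝ) 1 = Icc 0 1 := uIcc_of_le zero_le_one
  have hcomp : IsCompact (Icc (0:ℝ) T ×ˢ Icc (0:ℝ) 1) := isCompact_Icc.prod isCompact_Icc
  have huc := hcomp.uniformContinuousOn_of_continuous hf'
  rw [hasDerivWithinAt_iff_isLittleO, Asymptotics.isLittleO_iff]
  intro ε hε
  rw [Metric.uniformContinuousOn_iff] at huc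
  obtain ⟨δ, hδ, hC⟩ := huc ε hε
  have hball : Icc (0:ℝ) T ∩ Metric.ball t δ ∈ nhdsWithin t (Icc (0:ℝ) T) :=
    inter_mem_nhdsWithin _ (Metric.ball_mem_nhds t hδ)
  filter_upwards [hball] with s hs
  obtain ⟨hsT, hsball⟩ := hs
  have hint : ∀ u ∈ Icc (0:ℝ) T, IntervalIntegrable (fun x => f u x) volume 0 1 :=
    fun u hu => (huIcc ▸ hfc u hu).intervalIntegrable
  have hfc' : ContinuousOn (fun x => f' t x) (Icc 0 1) :=
    hf'.comp (Continuous.continuousOn (by continuity)) (fun y hy => mk_mem_prod ht hy)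
  have hint' : IntervalIntegrable (fun x => f' t x) volume 0 1 :=
    (huIcc ▸ hfc').intervalIntegrable
  have key : (fun s => ∫ x in (0:ℝ)..1, f s x) s - (∫ x in (0:ℝ)..1, f t x)
      - (s - t) • (∫ x in (0:ℝ)..1, f' t x)
      = ∫ x in (0:ℝ)..1, (f s x - f t x - (s - t) * f' t x) := by
    rw [intervalIntegral.integral_sub ((hint s hsT).sub (hint t ht)) (hint'.const_mul (s - t)),
      intervalIntegral.integral_sub (hint s hsT) (hint t ht),
      intervalIntegral.integral_const_mul, smul_eq_mul]
  rw [key]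
  -- pointwise bound via MVT
  have hSsub : uIcc t s ⊆ Icc (0:ℝ) T := (ordConnected_Icc).uIcc_subset ht hsT
  have bound : ∀ x ∈ Icc (0:ℝ) 1, ‖f s x - f t x - (s - t) * f' t x‖ ≤ ε * ‖s - t‖ := by
    intro x hx
    have hmvt := Convex.norm_image_sub_le_of_norm_hasDerivWithin_le
      (f := fun τ => f τ x - τ * f' t x) (f' := fun τ => f' τ x - f' t x)
      (s := uIcc t s) (C := ε) (x := t) (y := s)
      (fun τ hτ => ((hd τ (hSsub hτ) x hx).mono hSsub).sub
        (by simpa using (hasDerivWithinAt_id τ (uIcc t s)).mul_const (f' t x)))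
      (fun τ hτ => ?_) (convex_uIcc t s) left_mem_uIcc right_mem_uIcc
    · have : f s x - s * f' t x - (f t x - t * f' t x) = f s x - f t x - (s - t) * f' t x := by
        ring
      rw [this] at hmvt
      exact hmvt
    · have hts : dist t s < δ := by
        have h0 := Metric.mem_ball.mp hsball
        rwa [dist_comm] at h0
      have hd1 : dist τ t < δ :=
        lt_of_le_of_lt (Real.dist_le_of_mem_uIcc hτ left_mem_uIcc) hts
      have hdist : dist ((τ, x) : ℝ × ℝ) (t, x) < δ := by
        rw [Prod.dist_eq]
        simp only [dist_self]
        exact max_lt hd1 hδ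
      have := hC (τ, x) (mk_mem_prod (hSsub hτ) hx) (t, x) (mk_mem_prod ht hx) hdist
      rw [Real.dist_eq] at this
      exact le_of_lt this
  calc ‖∫ x in (0:ℝ)..1, (f s x - f t x - (s - t) * f' t x)‖
      ≤ ε * ‖s - t‖ * |1 - 0| := intervalIntegral.norm_integral_le_of_norm_le_const
        (fun x hx => bound x (by rw [uIoc_of_le zero_le_one] at hx; exact Ioc_subset_Icc_self hx))
    _ = ε * ‖s - t‖ := by norm_num

lemma ftc01 {w w' : ℝ → ℝ} (hw : ∀ x ∈ Icc (0:ℝ) 1, HasDerivWithinAt w (w' x) (Icc 0 1) x)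
    (hw' : ContinuousOn w' (Icc 0 1)) {b : ℝ} (hb : b ∈ Icc (0:ℝ) 1) :
    ∫ x in (0:ℝ)..b, w' x = w b - w 0 := by
  have hwc : ContinuousOn w (Icc (0:ℝ) 1) := fun x hx => (hw x hx).continuousWithinAt
  have hsub : Icc (0:ℝ) b ⊆ Icc 0 1 := Icc_subset_Icc le_rfl hb.2
  refine integral_eq_sub_of_hasDeriv_right_of_le hb.1 (hwc.mono hsub) (fun x hx => ?_) ?_
  · refine (hw x ⟨le_of_lt hx.1, le_of_lt (lt_of_lt_of_le hx.2 hb.2)⟩).mono_of_mem_nhdsWithin ?_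
    refine Filter.mem_of_superset (inter_mem_nhdsWithin (Ioi x) (Iic_mem_nhds
      (lt_of_lt_of_le hx.2 hb.2))) ?_
    rintro y ⟨hy1, hy2⟩
    exact ⟨le_of_lt (lt_of_le_of_lt hx.1.le hy1), hy2⟩
  · have h1 : ContinuousOn w' (uIcc (0:ℝ) b) := by
      rw [uIcc_of_le hb.1]; exact hw'.mono hsub
    exact h1.intervalIntegrable

lemma arith {A E G I Q J P : ℝ} (hA : 0 ≤ A) (hE : 0 ≤ E) (hG : 0 ≤ G) (hQ : 0 ≤ Q)
    (hJ : 0 ≤ J) (hP : 0 ≤ P)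
    (h1 : |I| ≤ P ^ ((1:ℝ)/2) * G ^ ((1:ℝ)/2))
    (h2 : P ≤ A ^ ((1:ℝ)/2) * Q ^ ((1:ℝ)/2))
    (h3 : J ≤ E ^ ((1:ℝ)/2) * G ^ ((1:ℝ)/2))
    (h4 : Q ≤ 2 * J * E) :
    -2*G - 4*I ≤ -G + 24 * A ^ ((2:ℝ)/3) * E := by
  have hQ' : Q ≤ 2 * (E ^ ((1:ℝ)/2) * G ^ ((1:ℝ)/2)) * E := by
    calc Q ≤ 2 * J * E := h4
      _ ≤ 2 * (E ^ ((1:ℝ)/2) * G ^ ((1:ℝ)/2)) * E := by gcongr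
  have hI : |I| ≤ (A ^ ((1:ℝ)/2) * (2 * (E ^ ((1:ℝ)/2) * G ^ ((1:ℝ)/2)) * E)
      ^ ((1:ℝ)/2)) ^ ((1:ℝ)/2) * G ^ ((1:ℝ)/2) := by
    calc |I| ≤ P ^ ((1:ℝ)/2) * G ^ ((1:ℝ)/2) := h1
      _ ≤ (A ^ ((1:ℝ)/2) * Q ^ ((1:ℝ)/2)) ^ ((1:ℝ)/2) * G ^ ((1:ℝ)/2) := by gcongr
      _ ≤ (A ^ ((1:ℝ)/2) * (2 * (E ^ ((1:ℝ)/2) * G ^ ((1:ℝ)/2)) * E)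
            ^ ((1:ℝ)/2)) ^ ((1:ℝ)/2) * G ^ ((1:ℝ)/2) := by
          gcongr
  have hIform : (A ^ ((1:ℝ)/2) * (2 * (E ^ ((1:ℝ)/2) * G ^ ((1:ℝ)/2)) * E)
      ^ ((1:ℝ)/2)) ^ ((1:ℝ)/2) * G ^ ((1:ℝ)/2)
      = (2:ℝ) ^ ((1:ℝ)/4) * A ^ ((1:ℝ)/4) * E ^ ((3:ℝ)/8) * G ^ ((5:ℝ)/8) := by
    rw [Real.mul_rpow (by positivity) (by positivity),
        Real.mul_rpow (by positivity) (by positivity),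
        Real.mul_rpow (by positivity) (by positivity),
        Real.mul_rpow (by positivity) (by positivity),
        Real.mul_rpow (by positivity) (by positivity)]
    simp only [← Real.rpow_mul hA, ← Real.rpow_mul hE, ← Real.rpow_mul hG,
      ← Real.rpow_mul (by norm_num : (0:ℝ) ≤ 2)]
    norm_num
    rw [show (((E ^ ((1:ℝ)/2) * G ^ ((1:ℝ)/2)) ^ ((1:ℝ)/2)) ^ ((1:ℝ)/2) : ℝ)
        = E ^ ((1:ℝ)/8) * G ^ ((1:ℝ)/8) from by
      rw [Real.mul_rpow (by positivity) (by positivity),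
        Real.mul_rpow (by positivity) (by positivity)]
      simp only [← Real.rpow_mul hE, ← Real.rpow_mul hG]; norm_num]
    rw [show (3:ℝ)/8 = 1/8 + 1/4 by norm_num, show (5:ℝ)/8 = 1/8 + 1/2 by norm_num,
      Real.rpow_add_of_nonneg hE (by norm_num) (by norm_num),
      Real.rpow_add_of_nonneg hG (by norm_num) (by norm_num)]
    ring
  rw [hIform] at hI
  -- Young's inequality
  set K := (2:ℝ) ^ ((1:ℝ)/4) * A ^ ((1:ℝ)/4) * E ^ ((3:ℝ)/8) with hK
  have hKnn : 0 ≤ 4 * K := by positivity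
  have hGnn : 0 ≤ G ^ ((5:ℝ)/8) := by positivity
  have hpq : Real.HolderConjugate ((8:ℝ)/3) ((8:ℝ)/5) := by
    constructor <;> norm_num
  have hy := Real.young_inequality_of_nonneg hKnn hGnn hpq
  have hKpow : (4 * K) ^ ((8:ℝ)/3) = 64 * A ^ ((2:ℝ)/3) * E := by
    have e1 : 4 * K = 2 ^ ((9:ℝ)/4) * (A ^ ((1:ℝ)/4) * E ^ ((3:ℝ)/8)) := by
      rw [hK, show (9:ℝ)/4 = 2 + 1/4 by norm_num,
        Real.rpow_add_of_nonneg (by norm_num) (by norm_num) (by norm_num),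
        show (2:ℝ) ^ (2:ℝ) = 4 by norm_num]
      ring
    rw [e1, Real.mul_rpow (by positivity) (by positivity),
      Real.mul_rpow (by positivity) (by positivity),
      ← Real.rpow_mul (by norm_num : (0:ℝ) ≤ 2), ← Real.rpow_mul hA, ← Real.rpow_mul hE]
    norm_num
    ring
  have hGpow : (G ^ ((5:ℝ)/8)) ^ ((8:ℝ)/5) = G := by
    rw [← Real.rpow_mul hG]
    norm_num
  rw [hKpow, hGpow] at hy
  have h4I : 4 * |I| ≤ 4 * K * G ^ ((5:ℝ)/8) := by
    have := mul_le_mul_of_nonneg_left hI (by norm_num : (0:ℝ) ≤ 4)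
    calc 4 * |I| ≤ 4 * (K * G ^ ((5:ℝ)/8)) := this
      _ = 4 * K * G ^ ((5:ℝ)/8) := by ring
  have habs : -4 * I ≤ 4 * |I| := by
    have := neg_abs_le I
    linarith
  have hGnn' : (0:ℝ) ≤ G := hG
  nlinarith [hy, h4I, habs]
/-- **Energy differential inequality for the linearized Burgers equation.**
If `η` is a classical solution of `∂_t η = ∂_ξ² η + 2 ∂_ξ(X η)` on
`[0,T] × [0,1]` with Dirichlet boundary conditions, then
`(d/dt) ‖η(t,·)‖_{L²}² ≤ -‖∂_ξ η(t,·)‖_{L²}² + c ‖X(t,·)‖_{L⁴}^{8/3} ‖η(t,·)‖_{L²}²`. -/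
theorem energy_differential_inequality :
    ∃ c : ℝ, 0 < c ∧
      ∀ (T : ℝ), 0 < T →
      ∀ (X Xξ η ηt ηξ ηξξ : ℝ → ℝ → ℝ),
        ContinuousOn (fun p : ℝ × ℝ => X p.1 p.2) (Icc (0:ℝ) T ×ˢ Icc (0:ℝ) 1) →
        ContinuousOn (fun p : ℝ × ℝ => Xξ p.1 p.2) (Icc (0:ℝ) T ×ˢ Icc (0:ℝ) 1) →
        ContinuousOn (fun p : ℝ × ℝ => η p.1 p.2) (Icc (0:ℝ) T ×ˢ Icc (0:ℝ) 1) →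
        ContinuousOn (fun p : ℝ × ℝ => ηt p.1 p.2) (Icc (0:ℝ) T ×ˢ Icc (0:ℝ) 1) →
        ContinuousOn (fun p : ℝ × ℝ => ηξ p.1 p.2) (Icc (0:ℝ) T ×ˢ Icc (0:ℝ) 1) →
        ContinuousOn (fun p : ℝ × ℝ => ηξξ p.1 p.2) (Icc (0:ℝ) T ×ˢ Icc (0:ℝ) 1) →
        (∀ t ∈ Icc (0:ℝ) T, ∀ ξ ∈ Icc (0:ℝ) 1,
          HasDerivWithinAt (fun x => X t x) (Xξ t ξ) (Icc (0:ℝ) 1) ξ) →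
        (∀ t ∈ Icc (0:ℝ) T, ∀ ξ ∈ Icc (0:ℝ) 1,
          HasDerivWithinAt (fun s => η s ξ) (ηt t ξ) (Icc (0:ℝ) T) t) →
        (∀ t ∈ Icc (0:ℝ) T, ∀ ξ ∈ Icc (0:ℝ) 1,
          HasDerivWithinAt (fun x => η t x) (ηξ t ξ) (Icc (0:ℝ) 1) ξ) →
        (∀ t ∈ Icc (0:ℝ) T, ∀ ξ ∈ Icc (0:ℝ) 1,
          HasDerivWithinAt (fun x => ηξ t x) (ηξξ t ξ) (Icc (0:ℝ) 1) ξ) →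
        (∀ t ∈ Icc (0:ℝ) T, η t 0 = 0 ∧ η t 1 = 0) →
        (∀ t ∈ Icc (0:ℝ) T, ∀ ξ ∈ Icc (0:ℝ) 1,
          ηt t ξ = ηξξ t ξ + 2 * (Xξ t ξ * η t ξ + X t ξ * ηξ t ξ)) →
        ∀ t ∈ Icc (0:ℝ) T, ∃ D : ℝ,
          HasDerivWithinAt (fun s => ∫ x in (0:ℝ)..1, η s x ^ 2) D (Icc (0:ℝ) T) t ∧
          D ≤ -(∫ x in (0:ℝ)..1, ηξ t x ^ 2) +
                c * (∫ x in (0:ℝ)..1, X t x ^ 4) ^ ((2:ℝ)/3) *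
                  (∫ x in (0:ℝ)..1, η t x ^ 2) := by
  refine ⟨24, by norm_num, ?_⟩
  intro T hT X Xξ η ηt ηξ ηξξ hX hXξ hη hηt hηξ hηξξ hdX hdt hdξ hdξξ hbc heq t ht
  have icc1 : uIcc (0:ℝ) 1 = Icc 0 1 := uIcc_of_le zero_le_one
  have slice : ∀ {F : ℝ → ℝ → ℝ},
      ContinuousOn (fun p : ℝ × ℝ => F p.1 p.2) (Icc (0:ℝ) T ×ˢ Icc (0:ℝ) 1) →
      ∀ s ∈ Icc (0:ℝ) T, ContinuousOn (fun x => F s x) (Icc (0:ℝ) 1) := by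
    intro F hF s hs
    exact hF.comp (Continuous.continuousOn (by continuity)) (fun y hy => mk_mem_prod hs hy)
  have hu : ContinuousOn (fun x => η t x) (Icc (0:ℝ) 1) := slice hη t ht
  have hu' : ContinuousOn (fun x => ηξ t x) (Icc (0:ℝ) 1) := slice hηξ t ht
  have hu'' : ContinuousOn (fun x => ηξξ t x) (Icc (0:ℝ) 1) := slice hηξξ t ht
  have hv : ContinuousOn (fun x => X t x) (Icc (0:ℝ) 1) := slice hX t ht
  have hv' : ContinuousOn (fun x => Xξ t x) (Icc (0:ℝ) 1) := slice hXξ t ht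
  have integ : ∀ {g : ℝ → ℝ}, ContinuousOn g (Icc (0:ℝ) 1) →
      IntervalIntegrable g volume 0 1 := fun hg => (icc1 ▸ hg).intervalIntegrable
  obtain ⟨hbc0, hbc1⟩ := hbc t ht
  -- the derivative of the energy
  have hD : HasDerivWithinAt (fun s => ∫ x in (0:ℝ)..1, η s x ^ 2)
      (∫ x in (0:ℝ)..1, 2 * η t x * ηt t x) (Icc 0 T) t := by
    refine paramDeriv (fun s x => η s x ^ 2) (fun s x => 2 * η s x * ηt s x) ?_ ?_ ?_ ht
    · exact (continuousOn_const.mul hη).mul hηt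
    · intro s hs x hx
      simpa using (hdt s hs x hx).fun_pow 2
    · intro s hs
      exact (slice hη s hs).pow 2
  -- FTC : boundary term vanishes
  have hw' : ContinuousOn (fun x => 2 * ηξ t x ^ 2 + 2 * η t x * ηξξ t x
      + 4 * Xξ t x * η t x ^ 2 + 8 * X t x * η t x * ηξ t x) (Icc (0:ℝ) 1) :=
    (((continuousOn_const.mul (hu'.pow 2)).add
      ((continuousOn_const.mul hu).mul hu'')).add
      ((continuousOn_const.mul hv').mul (hu.pow 2))).add
      (((continuousOn_const.mul hv).mul hu).mul hu')
  have hwD : ∀ x ∈ Icc (0:ℝ) 1, HasDerivWithinAt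
      (fun y => 2 * η t y * ηξ t y + 4 * X t y * η t y ^ 2)
      (2 * ηξ t x ^ 2 + 2 * η t x * ηξξ t x + 4 * Xξ t x * η t x ^ 2
        + 8 * X t x * η t x * ηξ t x) (Icc (0:ℝ) 1) x := by
    intro x hx
    have h1 : HasDerivWithinAt (fun y => 2 * (η t y * ηξ t y))
        (2 * (ηξ t x * ηξ t x + η t x * ηξξ t x)) (Icc (0:ℝ) 1) x :=
      ((hdξ t ht x hx).mul (hdξξ t ht x hx)).const_mul 2
    have h2 : HasDerivWithinAt (fun y => 4 * (X t y * η t y ^ 2))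
        (4 * (Xξ t x * η t x ^ 2 + X t x * ((2:ℕ) * η t x ^ 1 * ηξ t x))) (Icc (0:ℝ) 1) x :=
      ((hdX t ht x hx).mul ((hdξ t ht x hx).fun_pow 2)).const_mul 4
    have hfun : (fun y => 2 * η t y * ηξ t y + 4 * X t y * η t y ^ 2)
        = (fun y => 2 * (η t y * ηξ t y) + 4 * (X t y * η t y ^ 2)) := by
      funext y; ring
    rw [hfun]
    refine (h1.fun_add h2).congr_deriv ?_
    push_cast
    ring
  have hbd : (∫ x in (0:ℝ)..1, (2 * ηξ t x ^ 2 + 2 * η t x * ηξξ t x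
      + 4 * Xξ t x * η t x ^ 2 + 8 * X t x * η t x * ηξ t x)) = 0 := by
    rw [ftc01 hwD hw' (right_mem_Icc.mpr zero_le_one)]
    simp [hbc0, hbc1]
  -- express the derivative
  have int1 : IntervalIntegrable (fun x => 2 * η t x * ηt t x) volume 0 1 :=
    integ ((continuousOn_const.mul hu).mul (slice hηt t ht))
  have int2 : IntervalIntegrable (fun x => 2 * ηξ t x ^ 2
      + 4 * (X t x * η t x * ηξ t x)) volume 0 1 :=
    integ ((continuousOn_const.mul (hu'.pow 2)).add
      (continuousOn_const.mul ((hv.mul hu).mul hu')))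
  have intG : IntervalIntegrable (fun x => ηξ t x ^ 2) volume 0 1 := integ (hu'.pow 2)
  have intI : IntervalIntegrable (fun x => X t x * η t x * ηξ t x) volume 0 1 :=
    integ ((hv.mul hu).mul hu')
  have hDval : (∫ x in (0:ℝ)..1, 2 * η t x * ηt t x)
      = -2 * (∫ x in (0:ℝ)..1, ηξ t x ^ 2)
        - 4 * (∫ x in (0:ℝ)..1, X t x * η t x * ηξ t x) := by
    have e1 : (∫ x in (0:ℝ)..1, (2 * ηξ t x ^ 2 + 2 * η t x * ηξξ t x
        + 4 * Xξ t x * η t x ^ 2 + 8 * X t x * η t x * ηξ t x))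
        = (∫ x in (0:ℝ)..1, 2 * η t x * ηt t x)
          + ∫ x in (0:ℝ)..1, (2 * ηξ t x ^ 2 + 4 * (X t x * η t x * ηξ t x)) := by
      rw [← intervalIntegral.integral_add int1 int2]
      refine intervalIntegral.integral_congr fun x hx => ?_
      rw [icc1] at hx
      rw [heq t ht x hx]
      ring
    have e2 : (∫ x in (0:ℝ)..1, (2 * ηξ t x ^ 2 + 4 * (X t x * η t x * ηξ t x)))
        = 2 * (∫ x in (0:ℝ)..1, ηξ t x ^ 2)
          + 4 * (∫ x in (0:ℝ)..1, X t x * η t x * ηξ t x) := by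
      rw [intervalIntegral.integral_add (integ (g := fun x => 2 * ηξ t x ^ 2) (continuousOn_const.mul (hu'.pow 2)))
        (integ (g := fun x => 4 * (X t x * η t x * ηξ t x)) (continuousOn_const.mul ((hv.mul hu).mul hu'))),
        intervalIntegral.integral_const_mul, intervalIntegral.integral_const_mul]
    rw [e1, e2] at hbd
    linarith
  -- estimates
  have h1 : |∫ x in (0:ℝ)..1, X t x * η t x * ηξ t x|
      ≤ (∫ x in (0:ℝ)..1, (X t x * η t x) ^ 2) ^ ((1:ℝ)/2)
        * (∫ x in (0:ℝ)..1, ηξ t x ^ 2) ^ ((1:ℝ)/2) := by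
    refine le_trans (le_trans (intervalIntegral.abs_integral_le_integral_abs zero_le_one)
      (le_of_eq (intervalIntegral.integral_congr fun x hx => abs_mul _ _))) ?_
    exact myCS (hv.mul hu) hu'
  have h2 : (∫ x in (0:ℝ)..1, (X t x * η t x) ^ 2)
      ≤ (∫ x in (0:ℝ)..1, X t x ^ 4) ^ ((1:ℝ)/2)
        * (∫ x in (0:ℝ)..1, η t x ^ 4) ^ ((1:ℝ)/2) := by
    have e : (∫ x in (0:ℝ)..1, (X t x * η t x) ^ 2)
        = ∫ x in (0:ℝ)..1, |X t x ^ 2| * |η t x ^ 2| :=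
      intervalIntegral.integral_congr fun x hx => by
        rw [abs_of_nonneg (sq_nonneg _), abs_of_nonneg (sq_nonneg _)]; ring
    have e4X : (∫ x in (0:ℝ)..1, (X t x ^ 2) ^ 2) = ∫ x in (0:ℝ)..1, X t x ^ 4 :=
      intervalIntegral.integral_congr fun x hx => by ring
    have e4η : (∫ x in (0:ℝ)..1, (η t x ^ 2) ^ 2) = ∫ x in (0:ℝ)..1, η t x ^ 4 :=
      intervalIntegral.integral_congr fun x hx => by ring
    rw [e, ← e4X, ← e4η]
    exact myCS (hv.pow 2) (hu.pow 2)
  have h3 : (∫ x in (0:ℝ)..1, |η t x| * |ηξ t x|)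
      ≤ (∫ x in (0:ℝ)..1, η t x ^ 2) ^ ((1:ℝ)/2)
        * (∫ x in (0:ℝ)..1, ηξ t x ^ 2) ^ ((1:ℝ)/2) := myCS hu hu'
  -- pointwise bound and L⁴ interpolation
  have hpt : ∀ x ∈ Icc (0:ℝ) 1,
      η t x ^ 2 ≤ 2 * ∫ y in (0:ℝ)..1, |η t y| * |ηξ t y| := by
    intro x hx
    have hw2 : ∀ y ∈ Icc (0:ℝ) 1, HasDerivWithinAt (fun z => η t z ^ 2)
        (2 * η t y * ηξ t y) (Icc (0:ℝ) 1) y := by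
      intro y hy
      simpa using (hdξ t ht y hy).fun_pow 2
    have hw2c : ContinuousOn (fun y => 2 * η t y * ηξ t y) (Icc (0:ℝ) 1) :=
      (continuousOn_const.mul hu).mul hu'
    have hftc := ftc01 hw2 hw2c hx
    rw [hbc0] at hftc
    norm_num at hftc
    have intSub : ∀ {g : ℝ → ℝ}, ContinuousOn g (Icc (0:ℝ) 1) →
        IntervalIntegrable g volume 0 x := by
      intro g hg
      have hcg : ContinuousOn g (uIcc 0 x) := by
        rw [uIcc_of_le hx.1]; exact hg.mono (Icc_subset_Icc le_rfl hx.2)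
      exact hcg.intervalIntegrable
    calc η t x ^ 2 = ∫ y in (0:ℝ)..x, 2 * η t y * ηξ t y := hftc.symm
      _ ≤ ∫ y in (0:ℝ)..x, 2 * (|η t y| * |ηξ t y|) := by
          refine intervalIntegral.integral_mono_on hx.1 (intSub hw2c)
            (intSub (continuousOn_const.mul (hu.abs.mul hu'.abs))) fun y hy => ?_
          calc 2 * η t y * ηξ t y = 2 * (η t y * ηξ t y) := by ring
            _ ≤ 2 * (|η t y| * |ηξ t y|) := by
                refine mul_le_mul_of_nonneg_left ?_ (by norm_num)
                exact (le_abs_self _).trans (le_of_eq (abs_mul _ _))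
      _ ≤ ∫ y in (0:ℝ)..1, 2 * (|η t y| * |ηξ t y|) := by
          refine intervalIntegral.integral_mono_interval le_rfl hx.1 hx.2
            (Filter.Eventually.of_forall fun y => by positivity)
            (integ (continuousOn_const.mul (hu.abs.mul hu'.abs)))
      _ = 2 * ∫ y in (0:ℝ)..1, |η t y| * |ηξ t y| := intervalIntegral.integral_const_mul _ _
  have h4 : (∫ x in (0:ℝ)..1, η t x ^ 4)
      ≤ 2 * (∫ x in (0:ℝ)..1, |η t x| * |ηξ t x|) * (∫ x in (0:ℝ)..1, η t x ^ 2) := by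
    calc (∫ x in (0:ℝ)..1, η t x ^ 4)
        = ∫ x in (0:ℝ)..1, η t x ^ 2 * η t x ^ 2 :=
          intervalIntegral.integral_congr fun x hx => by ring
      _ ≤ ∫ x in (0:ℝ)..1, (2 * ∫ y in (0:ℝ)..1, |η t y| * |ηξ t y|) * η t x ^ 2 := by
          refine intervalIntegral.integral_mono_on zero_le_one
            (integ ((hu.pow 2).mul (hu.pow 2)))
            (integ (continuousOn_const.mul (hu.pow 2))) fun x hx => ?_
          exact mul_le_mul_of_nonneg_right (hpt x hx) (sq_nonneg _)
      _ = 2 * (∫ x in (0:ℝ)..1, |η t x| * |ηξ t x|) * (∫ x in (0:ℝ)..1, η t x ^ 2) :=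
          intervalIntegral.integral_const_mul _ _
  -- nonnegativity
  have hAnn : 0 ≤ ∫ x in (0:ℝ)..1, X t x ^ 4 :=
    intervalIntegral.integral_nonneg zero_le_one fun x _ => by positivity
  have hEnn : 0 ≤ ∫ x in (0:ℝ)..1, η t x ^ 2 :=
    intervalIntegral.integral_nonneg zero_le_one fun x _ => by positivity
  have hGnn : 0 ≤ ∫ x in (0:ℝ)..1, ηξ t x ^ 2 :=
    intervalIntegral.integral_nonneg zero_le_one fun x _ => by positivity
  have hQnn : 0 ≤ ∫ x in (0:ℝ)..1, η t x ^ 4 :=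
    intervalIntegral.integral_nonneg zero_le_one fun x _ => by positivity
  have hJnn : 0 ≤ ∫ x in (0:ℝ)..1, |η t x| * |ηξ t x| :=
    intervalIntegral.integral_nonneg zero_le_one fun x _ => by positivity
  have hPnn : 0 ≤ ∫ x in (0:ℝ)..1, (X t x * η t x) ^ 2 :=
    intervalIntegral.integral_nonneg zero_le_one fun x _ => by positivity
  have key := arith hAnn hEnn hGnn hQnn hJnn hPnn h1 h2 h3 h4
  refine ⟨∫ x in (0:ℝ)..1, 2 * η t x * ηt t x, hD, ?_⟩
  rw [hDval]
  linarith
end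

section
/- (The Dirichlet space H¹₀(0,1) is an algebra.) For all continuously differentiable functions f, g : [0,1] → ℝ with f(0) = f(1) = 0 and g(0) = g(1) = 0 one has ‖(fg)'‖_{L²} ≤ 2 ‖f'‖_{L²} ‖g'‖_{L²}. -/
open MeasureTheory Set intervalIntegral

private lemma cs_one (φ : ℝ → ℝ) (hφ : ContinuousOn φ (Icc (0:ℝ) 1)) :
    (∫ x in (0:ℝ)..1, |φ x|) ≤ Real.sqrt (∫ x in (0:ℝ)..1, φ x ^ 2) := by
  have huIcc : uIcc (0:ℝ) 1 = Icc (0:ℝ) 1 := uIcc_of_le (by norm_num)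
  have hφu : ContinuousOn φ (uIcc (0:ℝ) 1) := huIcc ▸ hφ
  have hint_abs : IntervalIntegrable (fun x => |φ x|) volume 0 1 :=
    (hφu.abs).intervalIntegrable
  have hint_sq : IntervalIntegrable (fun x => φ x ^ 2) volume 0 1 :=
    (hφu.pow 2).intervalIntegrable
  set c : ℝ := ∫ x in (0:ℝ)..1, |φ x| with hc
  have hc0 : 0 ≤ c :=
    intervalIntegral.integral_nonneg (by norm_num) (fun x _ => abs_nonneg _)
  have hexp : (∫ x in (0:ℝ)..1, (|φ x| - c) ^ 2)
      = (∫ x in (0:ℝ)..1, φ x ^ 2) - c ^ 2 := by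
    have : ∀ x : ℝ, (|φ x| - c) ^ 2 = φ x ^ 2 - (2 * c) * |φ x| + c ^ 2 := by
      intro x; rw [sub_sq, sq_abs]; ring
    simp_rw [this]
    rw [intervalIntegral.integral_add (hint_sq.sub (hint_abs.const_mul _))
        intervalIntegrable_const,
      intervalIntegral.integral_sub hint_sq (hint_abs.const_mul _),
      intervalIntegral.integral_const_mul, intervalIntegral.integral_const, ← hc]
    simp only [smul_eq_mul]
    ring
  have hnn : 0 ≤ ∫ x in (0:ℝ)..1, (|φ x| - c) ^ 2 :=
    intervalIntegral.integral_nonneg (by norm_num) (fun x _ => sq_nonneg _)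
  have : c ^ 2 ≤ ∫ x in (0:ℝ)..1, φ x ^ 2 := by linarith [hexp ▸ hnn]
  exact Real.le_sqrt_of_sq_le this

private lemma sup_bound (f f' : ℝ → ℝ)
    (hf : ∀ x ∈ Icc (0:ℝ) 1, HasDerivWithinAt f (f' x) (Icc (0:ℝ) 1) x)
    (hf' : ContinuousOn f' (Icc (0:ℝ) 1)) (hf0 : f 0 = 0) :
    ∀ x ∈ Icc (0:ℝ) 1, |f x| ≤ Real.sqrt (∫ t in (0:ℝ)..1, f' t ^ 2) := by
  intro x hx
  obtain ⟨hx0, hx1⟩ := hx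
  have huIcc : uIcc (0:ℝ) 1 = Icc (0:ℝ) 1 := uIcc_of_le (by norm_num)
  have hfcont : ContinuousOn f (Icc (0:ℝ) 1) :=
    fun y hy => (hf y hy).continuousWithinAt
  have hintf' : IntervalIntegrable f' volume 0 1 :=
    (huIcc ▸ hf' : ContinuousOn f' (uIcc (0:ℝ) 1)).intervalIntegrable
  have hintf'x : IntervalIntegrable f' volume 0 x :=
    hintf'.mono_set (by rw [huIcc, uIcc_of_le hx0]; exact Icc_subset_Icc le_rfl hx1)
  have hftc : (∫ t in (0:ℝ)..x, f' t) = f x - f 0 := by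
    apply intervalIntegral.integral_eq_sub_of_hasDeriv_right_of_le hx0
    · exact hfcont.mono (Icc_subset_Icc le_rfl hx1)
    · intro y hy
      have hy' : y ∈ Icc (0:ℝ) 1 := ⟨hy.1.le, hy.2.le.trans hx1⟩
      exact (hf y hy').mono_of_mem_nhdsWithin
        (Icc_mem_nhdsGT_of_mem ⟨hy.1.le, hy.2.trans_le hx1⟩)
    · exact hintf'x
  have h1 : |f x| ≤ ∫ t in (0:ℝ)..x, |f' t| := by
    rw [show f x = ∫ t in (0:ℝ)..x, f' t by rw [hftc, hf0, sub_zero]]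
    exact intervalIntegral.abs_integral_le_integral_abs hx0
  have h2 : (∫ t in (0:ℝ)..x, |f' t|) ≤ ∫ t in (0:ℝ)..1, |f' t| := by
    apply intervalIntegral.integral_mono_interval le_rfl hx0 hx1
    · exact Filter.Eventually.of_forall (fun t => abs_nonneg _)
    · exact ((huIcc ▸ hf' : ContinuousOn f' (uIcc (0:ℝ) 1)).abs).intervalIntegrable
  exact h1.trans (h2.trans (cs_one f' hf'))

/-- **The Dirichlet space H¹₀(0,1) is an algebra.** For continuously
differentiable `f, g : [0,1] → ℝ` vanishing at the endpoints,
`‖(fg)'‖_{L²} ≤ 2 ‖f'‖_{L²} ‖g'‖_{L²}`. -/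
theorem H10_algebra (f f' g g' : ℝ → ℝ)
    (hf : ∀ x ∈ Icc (0:ℝ) 1, HasDerivWithinAt f (f' x) (Icc (0:ℝ) 1) x)
    (hf' : ContinuousOn f' (Icc (0:ℝ) 1))
    (hg : ∀ x ∈ Icc (0:ℝ) 1, HasDerivWithinAt g (g' x) (Icc (0:ℝ) 1) x)
    (hg' : ContinuousOn g' (Icc (0:ℝ) 1))
    (hf0 : f 0 = 0) (hf1 : f 1 = 0) (hg0 : g 0 = 0) (hg1 : g 1 = 0) :
    Real.sqrt (∫ x in (0:ℝ)..1, (f' x * g x + f x * g' x) ^ 2) ≤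
      2 * Real.sqrt (∫ x in (0:ℝ)..1, f' x ^ 2) *
        Real.sqrt (∫ x in (0:ℝ)..1, g' x ^ 2) := by
  set A := Real.sqrt (∫ x in (0:ℝ)..1, f' x ^ 2) with hA
  set B := Real.sqrt (∫ x in (0:ℝ)..1, g' x ^ 2) with hB
  have hA0 : 0 ≤ A := Real.sqrt_nonneg _
  have hB0 : 0 ≤ B := Real.sqrt_nonneg _
  have huIcc : uIcc (0:ℝ) 1 = Icc (0:ℝ) 1 := uIcc_of_le (by norm_num)
  have hfbd := sup_bound f f' hf hf' hf0
  have hgbd := sup_bound g g' hg hg' hg0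
  have hfcont : ContinuousOn f (Icc (0:ℝ) 1) :=
    fun y hy => (hf y hy).continuousWithinAt
  have hgcont : ContinuousOn g (Icc (0:ℝ) 1) :=
    fun y hy => (hg y hy).continuousWithinAt
  -- Integrability
  have hint1 : IntervalIntegrable (fun x => (f' x * g x + f x * g' x) ^ 2) volume 0 1 := by
    apply ContinuousOn.intervalIntegrable
    rw [huIcc]
    exact (((hf'.mul hgcont).add (hfcont.mul hg')).pow 2)
  have hint2 : IntervalIntegrable
      (fun x => 2 * B ^ 2 * f' x ^ 2 + 2 * A ^ 2 * g' x ^ 2) volume 0 1 := by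
    apply ContinuousOn.intervalIntegrable
    rw [huIcc]
    exact ((continuousOn_const.mul (hf'.pow 2)).add (continuousOn_const.mul (hg'.pow 2)))
  -- pointwise bound
  have hpt : ∀ x ∈ Icc (0:ℝ) 1,
      (f' x * g x + f x * g' x) ^ 2 ≤ 2 * B ^ 2 * f' x ^ 2 + 2 * A ^ 2 * g' x ^ 2 := by
    intro x hx
    have h1 : (f' x * g x + f x * g' x) ^ 2
        ≤ 2 * (f' x * g x) ^ 2 + 2 * (f x * g' x) ^ 2 := by nlinarith [sq_nonneg (f' x * g x - f x * g' x)]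
    have hgB : |g x| ≤ B := by rw [hB]; exact hgbd x hx
    have hfA : |f x| ≤ A := by rw [hA]; exact hfbd x hx
    have hg2 : g x ^ 2 ≤ B ^ 2 := by nlinarith [abs_nonneg (g x), sq_abs (g x)]
    have hf2 : f x ^ 2 ≤ A ^ 2 := by nlinarith [abs_nonneg (f x), sq_abs (f x)]
    have h2 : (f' x * g x) ^ 2 ≤ B ^ 2 * f' x ^ 2 := by
      rw [mul_pow]; nlinarith [sq_nonneg (f' x)]
    have h3 : (f x * g' x) ^ 2 ≤ A ^ 2 * g' x ^ 2 := by
      rw [mul_pow]; nlinarith [sq_nonneg (g' x)]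
    nlinarith
  have hmono : (∫ x in (0:ℝ)..1, (f' x * g x + f x * g' x) ^ 2)
      ≤ ∫ x in (0:ℝ)..1, 2 * B ^ 2 * f' x ^ 2 + 2 * A ^ 2 * g' x ^ 2 := by
    apply intervalIntegral.integral_mono_on (by norm_num) hint1 hint2 hpt
  have hAsq : (∫ x in (0:ℝ)..1, f' x ^ 2) = A ^ 2 := by
    rw [hA, Real.sq_sqrt]
    exact intervalIntegral.integral_nonneg (by norm_num) (fun x _ => sq_nonneg _)
  have hBsq : (∫ x in (0:ℝ)..1, g' x ^ 2) = B ^ 2 := by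
    rw [hB, Real.sq_sqrt]
    exact intervalIntegral.integral_nonneg (by norm_num) (fun x _ => sq_nonneg _)
  have hintf2 : IntervalIntegrable (fun x => f' x ^ 2) volume 0 1 := by
    apply ContinuousOn.intervalIntegrable; rw [huIcc]; exact hf'.pow 2
  have hintg2 : IntervalIntegrable (fun x => g' x ^ 2) volume 0 1 := by
    apply ContinuousOn.intervalIntegrable; rw [huIcc]; exact hg'.pow 2
  have hval : (∫ x in (0:ℝ)..1, 2 * B ^ 2 * f' x ^ 2 + 2 * A ^ 2 * g' x ^ 2)
      = (2 * A * B) ^ 2 := by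
    rw [intervalIntegral.integral_add ((hintf2.const_mul _)) ((hintg2.const_mul _)),
      intervalIntegral.integral_const_mul, intervalIntegral.integral_const_mul,
      hAsq, hBsq]
    ring
  calc Real.sqrt (∫ x in (0:ℝ)..1, (f' x * g x + f x * g' x) ^ 2)
      ≤ Real.sqrt ((2 * A * B) ^ 2) := Real.sqrt_le_sqrt (hval ▸ hmono)
    _ = 2 * A * B := Real.sqrt_sq (by positivity)
end

section
/- (Abstract form of Corollary 2.2 of the paper: closability of the weighted gradient.) Let H be a real separable Hilbert space with orthonormal basis (e_k)_{k∈ℕ}, let ν be a Borel probability measure on H, let λ : ℕ → ℝ be a bounded sequence with λ_k > 0 for all k, and let (C_k)_{k∈ℕ} be nonnegative constants. Assume that for every k and every φ ∈ C¹_b(H) one has |∫_H ⟨Dφ(x), e_k⟩ ν(dx)| ≤ C_k ‖φ‖_{L²(ν)}. If (φ_n) is a sequence in C¹_b(H) such that φ_n → 0 in L²(H,ν) and such that the H-valued functions G_n(x) = ∑_k λ_k ⟨Dφ_n(x), e_k⟩ e_k converge in L²(H,ν;H) to some F, then F = 0 ν-almost everywhere. -/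
open MeasureTheory Filter
open scoped RealInnerProductSpace Topology

/-- `φ : H → ℝ` is of class `C¹_b` with gradient `Dφ : H → H`: `φ` is bounded,
Fréchet differentiable with gradient `Dφ`, and `Dφ` is bounded and continuous. -/
def IsC1b {H : Type*} [NormedAddCommGroup H] [InnerProductSpace ℝ H] [CompleteSpace H]
    (φ : H → ℝ) (Dφ : H → H) : Prop :=
  (∃ M : ℝ, ∀ x, |φ x| ≤ M) ∧ (∀ x, HasGradientAt φ (Dφ x) x) ∧
    Continuous Dφ ∧ (∃ M : ℝ, ∀ x, ‖Dφ x‖ ≤ M)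


open Set
open scoped ENNReal
set_option linter.unusedSectionVars false
section Aux

variable {H : Type*} [NormedAddCommGroup H] [InnerProductSpace ℝ H] [CompleteSpace H]

theorem IsC1b.continuous {φ : H → ℝ} {Dφ : H → H} (h : IsC1b φ Dφ) : Continuous φ :=
  continuous_iff_continuousAt.2 fun x => (h.2.1 x).differentiableAt.continuousAt

theorem hasGradientAt_mul {φ ψ : H → ℝ} {u v : H} {x : H} (hφ : HasGradientAt φ u x)
    (hψ : HasGradientAt ψ v x) :
    HasGradientAt (fun y => φ y * ψ y) (ψ x • u + φ x • v) x := by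
  have h := (hφ.hasFDerivAt.mul hψ.hasFDerivAt)
  rw [hasGradientAt_iff_hasFDerivAt]
  convert h using 1
  · rfl
  · rfl
  apply ContinuousLinearMap.ext
  intro y
  simp [InnerProductSpace.toDual_apply_apply, inner_add_left, real_inner_smul_left, inner_smul_left]
  ring

theorem isC1b_mul {φ ψ : H → ℝ} {Dφ Dψ : H → H} (hφ : IsC1b φ Dφ) (hψ : IsC1b ψ Dψ) :
    IsC1b (fun x => φ x * ψ x) (fun x => ψ x • Dφ x + φ x • Dψ x) := by
  have hφc := hφ.continuous
  have hψc := hψ.continuous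
  obtain ⟨⟨M1, hM1⟩, hg1, hc1, ⟨K1, hK1⟩⟩ := hφ
  obtain ⟨⟨M2, hM2⟩, hg2, hc2, ⟨K2, hK2⟩⟩ := hψ
  refine ⟨⟨M1 * M2, fun x => ?_⟩, fun x => hasGradientAt_mul (hg1 x) (hg2 x),
    (hψc.smul hc1).add (hφc.smul hc2), ⟨M2 * K1 + M1 * K2, fun x => ?_⟩⟩
  · rw [abs_mul]
    exact mul_le_mul (hM1 x) (hM2 x) (abs_nonneg _) ((abs_nonneg _).trans (hM1 x))
  · refine (norm_add_le _ _).trans (add_le_add ?_ ?_)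
    · rw [norm_smul, Real.norm_eq_abs]
      exact mul_le_mul (hM2 x) (hK1 x) (norm_nonneg _) ((abs_nonneg _).trans (hM2 x))
    · rw [norm_smul, Real.norm_eq_abs]
      exact mul_le_mul (hM1 x) (hK2 x) (norm_nonneg _) ((abs_nonneg _).trans (hM1 x))

theorem isC1b_const (c : ℝ) : IsC1b (fun _ : H => c) (fun _ => 0) :=
  ⟨⟨|c|, fun _ => le_rfl⟩, fun _ => hasGradientAt_const _ _, continuous_const, ⟨0, by simp⟩⟩

variable {H : Type*} [NormedAddCommGroup H] [InnerProductSpace ℝ H] [CompleteSpace H]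

theorem hasGradientAt_comp_inner {f : ℝ → ℝ} {a : ℝ} (v x : H)
    (hf : HasDerivAt f a ⟪x, v⟫) :
    HasGradientAt (fun y => f ⟪y, v⟫) (a • v) x := by
  have hfun : (fun y : H => ⟪y, v⟫) = fun y => (innerSL ℝ v) y := by
    funext y; rw [innerSL_apply_apply, real_inner_comm]
  have hL : HasFDerivAt (fun y : H => ⟪y, v⟫) (innerSL ℝ v) x := by
    rw [hfun]; exact (innerSL ℝ v).hasFDerivAt
  have h := hf.comp_hasFDerivAt x hL
  rw [hasGradientAt_iff_hasFDerivAt]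
  convert h using 1
  · rfl
  · rfl
  apply ContinuousLinearMap.ext
  intro y
  simp [InnerProductSpace.toDual_apply_apply, real_inner_smul_left, real_inner_comm]

theorem smoothTransition_deriv_bound : ∃ K : ℝ, 0 ≤ K ∧ ∀ t, |deriv Real.smoothTransition t| ≤ K := by
  obtain ⟨C, hC⟩ := (isCompact_Icc (a := (0:ℝ)) (b := 1)).exists_bound_of_continuousOn
    (((Real.smoothTransition.contDiff (n := 1)).continuous_deriv le_rfl).continuousOn)
  refine ⟨max C 0, le_max_right _ _, fun t => ?_⟩
  rcases le_or_gt t 1 with h1 | h1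
  · rcases le_or_gt 0 t with h0 | h0
    · exact (hC t ⟨h0, h1⟩).trans (le_max_left _ _)
    · have : deriv Real.smoothTransition t = 0 := by
        have hev : Real.smoothTransition =ᶠ[𝓝 t] (fun _ => (0:ℝ)) := by
          filter_upwards [Iio_mem_nhds h0] with s hs
          exact Real.smoothTransition.zero_of_nonpos (le_of_lt hs)
        rw [hev.deriv_eq, deriv_const]
      simp [this, le_max_right]
  · have : deriv Real.smoothTransition t = 0 := by
      have hev : Real.smoothTransition =ᶠ[𝓝 t] (fun _ => (1:ℝ)) := by
        filter_upwards [Ioi_mem_nhds h1] with s hs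
        exact Real.smoothTransition.one_of_one_le (le_of_lt hs)
      rw [hev.deriv_eq, deriv_const]
    simp [this, le_max_right]

noncomputable def cutfn (c : ℝ) (n : ℕ) (t : ℝ) : ℝ :=
  Real.smoothTransition ((c - t) * (n + 1) + 1)

noncomputable def cutfn' (c : ℝ) (n : ℕ) (t : ℝ) : ℝ :=
  -((n : ℝ) + 1) * deriv Real.smoothTransition ((c - t) * (n + 1) + 1)

theorem cutfn_hasDerivAt (c : ℝ) (n : ℕ) (t : ℝ) :
    HasDerivAt (cutfn c n) (cutfn' c n t) t := by
  have h1 : HasDerivAt (fun t : ℝ => (c - t) * (n + 1) + 1) (-((n : ℝ) + 1)) t := by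
    have := (((hasDerivAt_id t).const_sub c).mul_const ((n : ℝ) + 1)).add_const 1
    simpa using this
  have h2 : HasDerivAt Real.smoothTransition
      (deriv Real.smoothTransition ((c - t) * (n + 1) + 1)) ((c - t) * (n + 1) + 1) :=
    (((Real.smoothTransition.contDiff (n := 1)).differentiable one_ne_zero) _).hasDerivAt
  unfold cutfn cutfn'
  have h3 := h2.comp t h1
  simp only [Function.comp_def] at h3
  convert h3 using 1
  · rfl
  · rfl
  ring
theorem cutfn'_continuous (c : ℝ) (n : ℕ) : Continuous (cutfn' c n) := by
  refine continuous_const.mul ?_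
  exact ((Real.smoothTransition.contDiff (n := 1)).continuous_deriv le_rfl).comp (by continuity)

theorem cutfn_nonneg (c : ℝ) (n : ℕ) (t : ℝ) : 0 ≤ cutfn c n t := Real.smoothTransition.nonneg _
theorem cutfn_le_one (c : ℝ) (n : ℕ) (t : ℝ) : cutfn c n t ≤ 1 := Real.smoothTransition.le_one _

theorem cutfn_tendsto (c : ℝ) (t : ℝ) :
    Tendsto (fun n => cutfn c n t) atTop (𝓝 (if t ≤ c then 1 else 0)) := by
  rcases le_or_gt t c with h | h
  · simp only [if_pos h]
    apply tendsto_const_nhds.congr'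
    filter_upwards [] with n
    have : (1:ℝ) ≤ (c - t) * (n + 1) + 1 := by
      nlinarith [sub_nonneg.2 h, Nat.cast_nonneg (α := ℝ) n]
    simp [cutfn, Real.smoothTransition.one_of_one_le this]
  · simp only [if_neg (not_le.2 h)]
    apply tendsto_const_nhds.congr'
    have hpos : 0 < t - c := sub_pos.2 h
    obtain ⟨N, hN⟩ := exists_nat_gt (1 / (t - c))
    filter_upwards [eventually_ge_atTop N] with n hn
    have hcast : (N : ℝ) ≤ (n : ℝ) := Nat.cast_le.2 hn
    have hn' : 1 / (t - c) < (n : ℝ) + 1 := by linarith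
    have harg : (c - t) * (n + 1) + 1 ≤ 0 := by
      rw [div_lt_iff₀ hpos] at hn'
      nlinarith
    simp [cutfn, Real.smoothTransition.zero_of_nonpos harg]

variable {H : Type*} [NormedAddCommGroup H] [InnerProductSpace ℝ H] [CompleteSpace H]

private theorem rpow_norm_mul_le {lam : ℕ → ℝ} {M : ℝ} (hM : ∀ k, |lam k| ≤ M)
    (g : ℕ → ℝ) (k : ℕ) :
    ‖lam k * g k‖ ^ (2:ℝ≥0∞).toReal ≤ M ^ (2:ℝ≥0∞).toReal * ‖g k‖ ^ (2:ℝ≥0∞).toReal := by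
  rw [← Real.mul_rpow ((abs_nonneg _).trans (hM 0)) (norm_nonneg _), norm_mul, Real.norm_eq_abs]
  refine Real.rpow_le_rpow (by positivity) ?_ (by norm_num)
  exact mul_le_mul_of_nonneg_right (hM k) (norm_nonneg _)

theorem memℓp_two_mul (lam : ℕ → ℝ) (M : ℝ) (hM : ∀ k, |lam k| ≤ M)
    (f : lp (fun _ : ℕ => ℝ) 2) : Memℓp (fun k => lam k * f k) 2 := by
  have hq : 0 < (2 : ℝ≥0∞).toReal := by norm_num
  apply memℓp_gen
  have hs : Summable fun k => M ^ (2:ℝ≥0∞).toReal * ‖f k‖ ^ (2:ℝ≥0∞).toReal :=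
    ((lp.memℓp f).summable hq).mul_left _
  exact Summable.of_nonneg_of_le (fun k => by positivity) (rpow_norm_mul_le hM f) hs

theorem lp_norm_mul_le (lam : ℕ → ℝ) (M : ℝ) (hM : ∀ k, |lam k| ≤ M) (hM0 : 0 ≤ M)
    (f : lp (fun _ : ℕ => ℝ) 2) :
    ‖(⟨fun k => lam k * f k, memℓp_two_mul lam M hM f⟩ : lp (fun _ : ℕ => ℝ) 2)‖ ≤ M * ‖f‖ := by
  have hq : 0 < (2 : ℝ≥0∞).toReal := by norm_num
  refine lp.norm_le_of_forall_sum_le hq (by positivity) (fun s => ?_)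
  calc ∑ k ∈ s, ‖(lam k * f k)‖ ^ (2:ℝ≥0∞).toReal
      ≤ ∑ k ∈ s, M ^ (2:ℝ≥0∞).toReal * ‖f k‖ ^ (2:ℝ≥0∞).toReal :=
        Finset.sum_le_sum fun k _ => rpow_norm_mul_le hM f k
    _ = M ^ (2:ℝ≥0∞).toReal * ∑ k ∈ s, ‖f k‖ ^ (2:ℝ≥0∞).toReal := by rw [Finset.mul_sum]
    _ ≤ M ^ (2:ℝ≥0∞).toReal * ‖f‖ ^ (2:ℝ≥0∞).toReal :=
        mul_le_mul_of_nonneg_left (lp.sum_rpow_le_norm_rpow hq f s) (by positivity)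
    _ = (M * ‖f‖) ^ (2:ℝ≥0∞).toReal := (Real.mul_rpow hM0 (norm_nonneg _)).symm

noncomputable def diagFun (b : HilbertBasis ℕ ℝ H) (lam : ℕ → ℝ) (M : ℝ) (hM : ∀ k, |lam k| ≤ M)
    (y : H) : H :=
  b.repr.symm ⟨fun k => lam k * b.repr y k, memℓp_two_mul lam M hM (b.repr y)⟩

theorem diagFun_repr (b : HilbertBasis ℕ ℝ H) (lam : ℕ → ℝ) (M : ℝ) (hM : ∀ k, |lam k| ≤ M)
    (y : H) (k : ℕ) :
    b.repr (diagFun b lam M hM y) k = lam k * b.repr y k := by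
  simp only [diagFun, LinearIsometryEquiv.apply_symm_apply]

theorem diagFun_hasSum (b : HilbertBasis ℕ ℝ H) (lam : ℕ → ℝ) (M : ℝ) (hM : ∀ k, |lam k| ≤ M)
    (y : H) :
    HasSum (fun k => (lam k * b.repr y k) • b k) (diagFun b lam M hM y) :=
  b.hasSum_repr_symm _

theorem diagFun_norm_le (b : HilbertBasis ℕ ℝ H) (lam : ℕ → ℝ) (M : ℝ) (hM : ∀ k, |lam k| ≤ M)
    (hM0 : 0 ≤ M) (y : H) : ‖diagFun b lam M hM y‖ ≤ M * ‖y‖ := by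
  rw [diagFun, LinearIsometryEquiv.norm_map]
  calc ‖(⟨fun k => lam k * b.repr y k, _⟩ : lp (fun _ : ℕ => ℝ) 2)‖
      ≤ M * ‖b.repr y‖ := lp_norm_mul_le lam M hM hM0 (b.repr y)
    _ = M * ‖y‖ := by rw [LinearIsometryEquiv.norm_map]

theorem diagFun_sub (b : HilbertBasis ℕ ℝ H) (lam : ℕ → ℝ) (M : ℝ) (hM : ∀ k, |lam k| ≤ M)
    (y z : H) :
    diagFun b lam M hM y - diagFun b lam M hM z = diagFun b lam M hM (y - z) := by
  rw [diagFun, diagFun, diagFun, ← map_sub]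
  congr 1
  apply lp.ext
  funext k
  simp only [lp.coeFn_sub, Pi.sub_apply, map_sub]
  ring

theorem diagFun_continuous (b : HilbertBasis ℕ ℝ H) (lam : ℕ → ℝ) (M : ℝ)
    (hM : ∀ k, |lam k| ≤ M) (hM0 : 0 ≤ M) : Continuous (diagFun b lam M hM) := by
  refine (LipschitzWith.of_dist_le_mul (K := M.toNNReal) fun y z => ?_).continuous
  rw [dist_eq_norm, dist_eq_norm, diagFun_sub, Real.coe_toNNReal M hM0]
  exact diagFun_norm_le b lam M hM hM0 (y - z)

variable {H : Type*} [NormedAddCommGroup H] [InnerProductSpace ℝ H]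

theorem borel_le_of_balls [SecondCountableTopology H] (m₀ : MeasurableSpace H)
    (h : ∀ (y : H) (r : ℝ), MeasurableSet[m₀] (Metric.ball y r)) : borel H ≤ m₀ := by
  refine MeasurableSpace.generateFrom_le fun U hU => ?_
  obtain ⟨D, hDc, hDd⟩ := TopologicalSpace.exists_countable_dense H
  have hrepr : U = ⋃ y ∈ D, ⋃ q : ℚ, ⋃ (_ : Metric.ball y (q:ℝ) ⊆ U), Metric.ball y (q:ℝ) := by
    ext x
    simp only [mem_iUnion]
    constructor
    · intro hx
      obtain ⟨ε, hε, hball⟩ := Metric.isOpen_iff.1 hU x hx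
      obtain ⟨y, hy1, hy2⟩ := Metric.dense_iff.1 hDd x (ε/3) (by linarith)
      obtain ⟨q, hq1, hq2⟩ := exists_rat_btwn (show ε/3 < ε/2 by linarith)
      rw [Metric.mem_ball] at hy1
      refine ⟨y, hy2, q, fun z hz => hball ?_, ?_⟩
      · rw [Metric.mem_ball] at hz ⊢
        have : dist z x ≤ dist z y + dist y x := dist_triangle _ _ _
        have hyx : dist y x = dist x y := dist_comm y x
        linarith
      · rw [Metric.mem_ball, dist_comm]
        linarith
    · rintro ⟨y, _, q, hsub, hx⟩
      exact hsub hx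
  rw [hrepr]
  exact MeasurableSet.biUnion hDc fun y _ => MeasurableSet.iUnion fun q =>
    MeasurableSet.iUnion fun _ => h y q

variable [CompleteSpace H]

def coordPi (b : HilbertBasis ℕ ℝ H) : Set (Set H) :=
  {S : Set H | ∃ (s : Finset ℕ) (c : ℕ → ℝ), S = {x | ∀ i ∈ s, ⟪x, b i⟫ ≤ c i}}

theorem coordPi_isPiSystem (b : HilbertBasis ℕ ℝ H) : IsPiSystem (coordPi b) := by
  rintro S ⟨s, c, rfl⟩ T ⟨t, d, rfl⟩ -
  refine ⟨s ∪ t, fun i => if i ∈ s then (if i ∈ t then min (c i) (d i) else c i) else d i, ?_⟩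
  ext x
  constructor
  · rintro ⟨h1, h2⟩ i hi
    by_cases hs : i ∈ s
    · by_cases ht : i ∈ t
      · simp only [if_pos hs, if_pos ht, le_min_iff]
        exact ⟨h1 i hs, h2 i ht⟩
      · simp only [if_pos hs, if_neg ht]
        exact h1 i hs
    · simp only [if_neg hs]
      exact h2 i ((Finset.mem_union.1 hi).resolve_left hs)
  · intro h
    refine ⟨fun i hi => ?_, fun i hi => ?_⟩
    · have := h i (Finset.mem_union_left t hi)
      beta_reduce at this
      rw [if_pos hi] at this
      by_cases ht : i ∈ t
      · rw [if_pos ht] at this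
        exact this.trans (min_le_left _ _)
      · rwa [if_neg ht] at this
    · have := h i (Finset.mem_union_right s hi)
      beta_reduce at this
      by_cases hs : i ∈ s
      · rw [if_pos hs, if_pos hi] at this
        exact this.trans (min_le_right _ _)
      · rwa [if_neg hs] at this

theorem coordPi_generates [MeasurableSpace H] [BorelSpace H] [SecondCountableTopology H]
    (b : HilbertBasis ℕ ℝ H) :
    MeasurableSpace.generateFrom (coordPi b) = ‹MeasurableSpace H› := by
  apply le_antisymm
  · refine MeasurableSpace.generateFrom_le ?_
    rintro S ⟨s, c, rfl⟩
    have : MeasurableSet {x : H | ∀ i ∈ s, ⟪x, b i⟫ ≤ c i} := by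
      have : {x : H | ∀ i ∈ s, ⟪x, b i⟫ ≤ c i} = ⋂ i ∈ s, {x : H | ⟪x, b i⟫ ≤ c i} := by
        ext x; simp
      rw [this]
      refine MeasurableSet.biInter s.countable_toSet fun i _ => ?_
      exact measurableSet_le (Continuous.measurable (by continuity)) measurable_const
    exact this
  · rw [BorelSpace.measurable_eq (α := H)]
    set m₀ := MeasurableSpace.generateFrom (coordPi b) with hm₀
    refine borel_le_of_balls m₀ fun y r => ?_
    -- coordinates are m₀-measurable
    have hκ : ∀ i : ℕ, Measurable[m₀] (fun x : H => ⟪x, b i⟫) := by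
      intro i
      refine measurable_of_Iic fun a => ?_
      refine MeasurableSpace.measurableSet_generateFrom ?_
      refine ⟨{i}, fun _ => a, ?_⟩
      ext x; simp [Set.mem_preimage]
    have hdist : Measurable[m₀] (fun x : H => ‖x - y‖) := by
      have hsq : Measurable[m₀] (fun x : H => (⟪x - y, x - y⟫ : ℝ)) := by
        refine measurable_of_tendsto_metrizable (f := fun m (x : H) =>
          ∑ i ∈ Finset.range m, (⟪x, b i⟫ - ⟪y, b i⟫) ^ 2) (fun m => ?_) ?_
        · exact Finset.measurable_sum _ fun i _ => ((hκ i).sub measurable_const).pow measurable_const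
        · rw [tendsto_pi_nhds]
          intro x
          have hPa : HasSum (fun i => (⟪x - y, b i⟫ : ℝ) * ⟪b i, x - y⟫) ⟪x - y, x - y⟫ :=
            b.hasSum_inner_mul_inner (x - y) (x - y)
          have : ∀ i, (⟪x - y, b i⟫ : ℝ) * ⟪b i, x - y⟫ = (⟪x, b i⟫ - ⟪y, b i⟫) ^ 2 := by
            intro i
            have h2 : (⟪b i, x - y⟫ : ℝ) = ⟪x - y, b i⟫ := real_inner_comm _ _
            have h3 : (⟪x - y, b i⟫ : ℝ) = ⟪x, b i⟫ - ⟪y, b i⟫ := inner_sub_left _ _ _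
            rw [h2, h3]
            ring
          simp_rw [this] at hPa
          exact hPa.tendsto_sum_nat
      have : (fun x : H => ‖x - y‖) = fun x => Real.sqrt (⟪x - y, x - y⟫ : ℝ) := by
        funext x
        rw [real_inner_self_eq_norm_mul_norm, Real.sqrt_mul_self (norm_nonneg _)]
      rw [this]
      exact Real.continuous_sqrt.measurable.comp hsq
    have : Metric.ball y r = (fun x : H => ‖x - y‖) ⁻¹' Set.Iio r := by
      ext x; simp [Metric.mem_ball, dist_eq_norm]
    rw [this]
    exact hdist measurableSet_Iio

variable {H : Type*} [NormedAddCommGroup H] [InnerProductSpace ℝ H]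
  [MeasurableSpace H] [BorelSpace H] [SecondCountableTopology H]
  {E : Type*} [NormedAddCommGroup E]
  (ν : Measure H) [IsProbabilityMeasure ν]

theorem memℒp_two_of_bound {f : H → E} (hf : Continuous f) (C : ℝ) (hC : ∀ x, ‖f x‖ ≤ C) :
    MemLp f 2 ν :=
  (memLp_top_of_bound hf.aestronglyMeasurable C (Filter.Eventually.of_forall hC)).mono_exponent
    le_top

theorem integrable_of_bound {f : H → E} (hf : Continuous f) (C : ℝ) (hC : ∀ x, ‖f x‖ ≤ C) :
    Integrable f ν :=
  memLp_one_iff_integrable.1 <|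
    (memLp_top_of_bound hf.aestronglyMeasurable C
      (Filter.Eventually.of_forall hC)).mono_exponent le_top

theorem integral_abs_le_L2 {g : H → ℝ} (hg : MemLp g 2 ν) :
    ∫ x, |g x| ∂ν ≤ (eLpNorm g 2 ν).toReal := by
  have h1 : ∫ x, |g x| ∂ν = (eLpNorm g 1 ν).toReal := by
    rw [eLpNorm_one_eq_lintegral_enorm]
    simpa [Real.norm_eq_abs] using integral_norm_eq_lintegral_enorm hg.aestronglyMeasurable
  rw [h1]
  exact ENNReal.toReal_mono hg.eLpNorm_ne_top
    (eLpNorm_le_eLpNorm_of_exponent_le one_le_two hg.aestronglyMeasurable)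

theorem sqrt_integral_sq_eq {g : H → ℝ} (hg : MemLp g 2 ν) :
    Real.sqrt (∫ x, g x ^ 2 ∂ν) = (eLpNorm g 2 ν).toReal := by
  rw [hg.eLpNorm_eq_integral_rpow_norm two_ne_zero ENNReal.ofNat_ne_top]
  rw [ENNReal.toReal_ofReal (by positivity)]
  have h2 : (2 : ℝ≥0∞).toReal = (2 : ℝ) := by norm_num
  rw [h2]
  have h3 : ∀ x, ‖g x‖ ^ (2:ℝ) = g x ^ 2 := fun x => by
    rw [Real.norm_eq_abs, show (2:ℝ) = ((2:ℕ):ℝ) by norm_num, Real.rpow_natCast, sq_abs]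
  simp_rw [h3]
  rw [Real.sqrt_eq_rpow]
  norm_num

end Aux
section More
variable {H : Type*} [NormedAddCommGroup H] [InnerProductSpace ℝ H] [CompleteSpace H]

theorem isC1b_cut (v : H) (c : ℝ) (n : ℕ) :
    IsC1b (fun x : H => cutfn c n ⟪x, v⟫) (fun x => cutfn' c n ⟪x, v⟫ • v) := by
  obtain ⟨K, hK0, hK⟩ := smoothTransition_deriv_bound
  have hinner : Continuous fun x : H => (⟪x, v⟫ : ℝ) := continuous_id.inner continuous_const
  refine ⟨⟨1, fun x => ?_⟩, fun x => hasGradientAt_comp_inner v x (cutfn_hasDerivAt _ _ _),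
    (((cutfn'_continuous c n).comp hinner).smul continuous_const),
    ⟨((n : ℝ) + 1) * K * ‖v‖, fun x => ?_⟩⟩
  · rw [abs_le]
    exact ⟨by linarith [cutfn_nonneg c n ⟪x, v⟫], cutfn_le_one _ _ _⟩
  · rw [norm_smul, Real.norm_eq_abs]
    have h1 : |cutfn' c n ⟪x, v⟫| ≤ ((n : ℝ) + 1) * K := by
      rw [cutfn', abs_mul, abs_neg]
      have : |((n : ℝ) + 1)| = (n : ℝ) + 1 := abs_of_pos (by positivity)
      rw [this]
      exact mul_le_mul_of_nonneg_left (hK _) (by positivity)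
    exact mul_le_mul_of_nonneg_right h1 (norm_nonneg _)

theorem isC1b_prod_exists (s : Finset ℕ) (v : ℕ → H) (c : ℕ → ℝ) (n : ℕ) :
    ∃ D, IsC1b (fun x : H => ∏ i ∈ s, cutfn (c i) n ⟪x, v i⟫) D := by
  classical
  induction s using Finset.induction_on with
  | empty =>
    refine ⟨fun _ => 0, ?_⟩
    have : (fun x : H => ∏ i ∈ (∅ : Finset ℕ), cutfn (c i) n ⟪x, v i⟫) = fun _ => (1:ℝ) := by
      funext x; simp
    rw [this]
    exact isC1b_const 1
  | @insert a s' h ih =>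
    obtain ⟨D, hD⟩ := ih
    have hfe : (fun x : H => ∏ i ∈ insert a s', cutfn (c i) n ⟪x, v i⟫)
        = fun x => cutfn (c a) n ⟪x, v a⟫ * ∏ i ∈ s', cutfn (c i) n ⟪x, v i⟫ := by
      funext x; rw [Finset.prod_insert h]
    rw [hfe]
    exact ⟨_, isC1b_mul (isC1b_cut (v a) (c a) n) hD⟩

end More

section More2
variable {H : Type*} [NormedAddCommGroup H] [InnerProductSpace ℝ H] [CompleteSpace H]

theorem cutfn_continuous (c : ℝ) (n : ℕ) : Continuous (cutfn c n) := by
  unfold cutfn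
  exact Real.smoothTransition.continuous.comp (by continuity)

end More2


/-- **Abstract form of Corollary 2.2 of the paper: closability of the weighted
gradient.** Let `(e_k)` be an orthonormal basis of `H`, `λ` a bounded positive
sequence, and suppose `|∫ ⟨Dφ, e_k⟩ dν| ≤ C_k ‖φ‖_{L²(ν)}` for every `k` and
every `φ ∈ C¹_b(H)`. If `φ_n ∈ C¹_b(H)`, `φ_n → 0` in `L²(ν)` and
`G_n = ∑_k λ_k ⟨Dφ_n(·), e_k⟩ e_k → F` in `L²(ν; H)`, then `F = 0` ν-a.e. -/
theorem closability_weighted_gradient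
    {H : Type*} [NormedAddCommGroup H] [InnerProductSpace ℝ H] [CompleteSpace H]
    [SecondCountableTopology H] [MeasurableSpace H] [BorelSpace H]
    (e : ℕ → H) (he : Orthonormal ℝ e)
    (he_span : (Submodule.span ℝ (Set.range e)).topologicalClosure = ⊤)
    (ν : Measure H) [IsProbabilityMeasure ν]
    (lam : ℕ → ℝ) (hlam_pos : ∀ k, 0 < lam k) (hlam_bdd : ∃ M : ℝ, ∀ k, lam k ≤ M)
    (Ck : ℕ → ℝ) (hCk : ∀ k, 0 ≤ Ck k)
    (hbound : ∀ (k : ℕ) (φ : H → ℝ) (Dφ : H → H), IsC1b φ Dφ →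
      |∫ x, ⟪Dφ x, e k⟫ ∂ν| ≤ Ck k * Real.sqrt (∫ x, φ x ^ 2 ∂ν))
    (φn : ℕ → H → ℝ) (Dφn : ℕ → H → H) (hC1b : ∀ n, IsC1b (φn n) (Dφn n))
    (F : H → H) (hF : MemLp F 2 ν)
    (hφ0 : Tendsto (fun n => eLpNorm (φn n) 2 ν) atTop (𝓝 0))
    (hconv : Tendsto
      (fun n => eLpNorm
        (fun x => (∑' k, (lam k * ⟪Dφn n x, e k⟫) • e k) - F x) 2 ν)
      atTop (𝓝 0)) :
    F =ᵐ[ν] 0 := by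
    classical
  obtain ⟨M₀, hM₀⟩ := hlam_bdd
  set M : ℝ := max M₀ 0 with hMdef
  have hM : ∀ k, |lam k| ≤ M := fun k =>
    (abs_of_pos (hlam_pos k)).le.trans ((hM₀ k).trans (le_max_left _ _))
  have hM0 : (0:ℝ) ≤ M := le_max_right _ _
  -- the Hilbert basis
  obtain ⟨b, hbe⟩ : ∃ b : HilbertBasis ℕ ℝ H, ⇑b = e :=
    ⟨HilbertBasis.mk he (by rw [he_span]), HilbertBasis.coe_mk _ _⟩
  have hek_norm : ∀ k, ‖e k‖ = 1 := fun k => he.1 k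
  have hbk : ∀ k, (b k : H) = e k := fun k => congrFun hbe k
  -- the diagonal operator
  set T : H → H := diagFun b lam M hM with hTdef
  have hT_cont : Continuous T := diagFun_continuous b lam M hM hM0
  have hT_norm : ∀ y, ‖T y‖ ≤ M * ‖y‖ := diagFun_norm_le b lam M hM hM0
  have hT_inner : ∀ (y : H) (k : ℕ), ⟪T y, e k⟫ = lam k * ⟪y, e k⟫ := by
    intro y k
    have h1 := diagFun_repr b lam M hM y k
    rw [b.repr_apply_apply, b.repr_apply_apply] at h1
    simp only [hbe, hbk] at h1
    calc (⟪T y, e k⟫ : ℝ) = ⟪e k, T y⟫ := real_inner_comm _ _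
      _ = lam k * ⟪e k, y⟫ := h1
      _ = lam k * ⟪y, e k⟫ := by rw [real_inner_comm]
  have hT_tsum : ∀ y : H, (∑' k, (lam k * ⟪y, e k⟫) • e k) = T y := by
    intro y
    have h := diagFun_hasSum b lam M hM y
    have h2 : (fun k => (lam k * b.repr y k) • b k) = fun k => (lam k * ⟪y, e k⟫) • e k := by
      funext k
      rw [b.repr_apply_apply]
      simp only [hbe, hbk]
      congr 1
      rw [real_inner_comm]
    rw [h2] at h
    exact h.tsum_eq
  set G : ℕ → H → H := fun n x => T (Dφn n x) with hGdef
  have hG_cont : ∀ n, Continuous (G n) := fun n => hT_cont.comp (hC1b n).2.2.1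
  have hconv' : Tendsto (fun n => eLpNorm (fun x => G n x - F x) 2 ν) atTop (𝓝 0) := by
    have : ∀ n, (fun x => (∑' k, (lam k * ⟪Dφn n x, e k⟫) • e k) - F x)
        = fun x => G n x - F x := by
      intro n; funext x; rw [hT_tsum]
    simp_rw [this] at hconv
    exact hconv
  -- L² facts
  have hFint : Integrable F ν := memLp_one_iff_integrable.1 (hF.mono_exponent one_le_two)
  have hφmem : ∀ n, MemLp (φn n) 2 ν := by
    intro n
    obtain ⟨Mn, hMn⟩ := (hC1b n).1
    exact memℒp_two_of_bound ν (hC1b n).continuous Mn fun x => by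
      rw [Real.norm_eq_abs]; exact hMn x
  have hGmem : ∀ n, MemLp (G n) 2 ν := by
    intro n
    obtain ⟨Kn, hKn⟩ := (hC1b n).2.2.2
    exact memℒp_two_of_bound ν (hG_cont n) (M * Kn) fun x =>
      (hT_norm _).trans (mul_le_mul_of_nonneg_left (hKn x) hM0)
  have hGFmem : ∀ n, MemLp (fun x => G n x - F x) 2 ν := fun n => (hGmem n).sub hF
  have hGFint : ∀ n, Integrable (fun x => G n x - F x) ν := fun n =>
    memLp_one_iff_integrable.1 ((hGFmem n).mono_exponent one_le_two)
  -- inner products with e k are integrable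
  have hinner_int : ∀ (f : H → H), Integrable f ν → ∀ k,
      Integrable (fun x => (⟪f x, e k⟫ : ℝ)) ν := by
    intro f hf k
    have h1 := (innerSL ℝ (e k)).integrable_comp hf
    have h2 : (fun x => (innerSL ℝ (e k)) (f x)) = fun x => (⟪f x, e k⟫ : ℝ) := by
      funext x; exact real_inner_comm _ _
    rwa [h2] at h1
  -- t n and s n
  set t : ℕ → ℝ := fun n => (eLpNorm (φn n) 2 ν).toReal with htdef
  set s : ℕ → ℝ := fun n => (eLpNorm (fun x => G n x - F x) 2 ν).toReal with hsdef
  have ht0 : Tendsto t atTop (𝓝 0) := by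
    have := (ENNReal.tendsto_toReal (a := 0) (by simp)).comp hφ0
    simpa [htdef, Function.comp_def] using this
  have hs0 : Tendsto s atTop (𝓝 0) := by
    have := (ENNReal.tendsto_toReal (a := 0) (by simp)).comp hconv'
    simpa [hsdef, Function.comp_def] using this
  -- STEP 1
  have key1 : ∀ (k : ℕ) (ψ : H → ℝ) (Dψ : H → H), IsC1b ψ Dψ →
      ∫ x, ψ x * ⟪F x, e k⟫ ∂ν = 0 := by
    intro k ψ Dψ hψ
    obtain ⟨Mψ₀, hMψ₀⟩ := hψ.1
    set Mψ : ℝ := max Mψ₀ 0 with hMψdef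
    have hMψ : ∀ x, |ψ x| ≤ Mψ := fun x => (hMψ₀ x).trans (le_max_left _ _)
    have hMψ0 : (0:ℝ) ≤ Mψ := le_max_right _ _
    obtain ⟨Kψ₀, hKψ₀⟩ := hψ.2.2.2
    set Kψ : ℝ := max Kψ₀ 0 with hKψdef
    have hKψ : ∀ x, ‖Dψ x‖ ≤ Kψ := fun x => (hKψ₀ x).trans (le_max_left _ _)
    have hKψ0 : (0:ℝ) ≤ Kψ := le_max_right _ _
    have hψc : Continuous ψ := hψ.continuous
    have hDψc : Continuous Dψ := hψ.2.2.1
    have hψm : AEStronglyMeasurable ψ ν := hψc.aestronglyMeasurable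
    set I : ℝ := ∫ x, ψ x * ⟪F x, e k⟫ ∂ν with hIdef
    have hFk_int : Integrable (fun x => (⟪F x, e k⟫:ℝ)) ν := hinner_int F hFint k
    have hψFk_int : Integrable (fun x => ψ x * ⟪F x, e k⟫) ν :=
      hFk_int.bdd_mul hψm (Eventually.of_forall fun x => by rw [Real.norm_eq_abs]; exact hMψ x)
    have tnonneg : ∀ n, 0 ≤ t n := fun n => ENNReal.toReal_nonneg
    have snonneg : ∀ n, 0 ≤ s n := fun n => ENNReal.toReal_nonneg
    have bound_n : ∀ n, |I| ≤ M * (Ck k * Mψ + Kψ) * t n + Mψ * s n := by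
      intro n
      obtain ⟨Mn₀, hMn₀⟩ := (hC1b n).1
      set Mn : ℝ := max Mn₀ 0 with hMndef
      have hMn : ∀ x, |φn n x| ≤ Mn := fun x => (hMn₀ x).trans (le_max_left _ _)
      have hMn0 : (0:ℝ) ≤ Mn := le_max_right _ _
      obtain ⟨Kn₀, hKn₀⟩ := (hC1b n).2.2.2
      set Kn : ℝ := max Kn₀ 0 with hKndef
      have hKn : ∀ x, ‖Dφn n x‖ ≤ Kn := fun x => (hKn₀ x).trans (le_max_left _ _)
      have hφnc : Continuous (φn n) := (hC1b n).continuous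
      have hDφnc : Continuous (Dφn n) := (hC1b n).2.2.1
      have hinner_bd : ∀ (u : H), |(⟪u, e k⟫:ℝ)| ≤ ‖u‖ := by
        intro u
        have := abs_real_inner_le_norm u (e k)
        rwa [hek_norm k, mul_one] at this
      -- integrable pieces
      have i1 : Integrable (fun x => ψ x * ⟪Dφn n x, e k⟫) ν := by
        refine integrable_of_bound ν (hψc.mul (hDφnc.inner continuous_const)) (Mψ * Kn) fun x => ?_
        rw [Real.norm_eq_abs, abs_mul]
        exact mul_le_mul (hMψ x) ((hinner_bd _).trans (hKn x)) (abs_nonneg _) hMψ0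
      have i2 : Integrable (fun x => φn n x * ⟪Dψ x, e k⟫) ν := by
        refine integrable_of_bound ν (hφnc.mul (hDψc.inner continuous_const)) (Mn * Kψ) fun x => ?_
        rw [Real.norm_eq_abs, abs_mul]
        exact mul_le_mul (hMn x) ((hinner_bd _).trans (hKψ x)) (abs_nonneg _) hMn0
      have hGFk_int : Integrable (fun x => (⟪G n x - F x, e k⟫:ℝ)) ν := hinner_int _ (hGFint n) k
      have i3 : Integrable (fun x => ψ x * ⟪G n x - F x, e k⟫) ν :=
        hGFk_int.bdd_mul hψm (Eventually.of_forall fun x => by rw [Real.norm_eq_abs]; exact hMψ x)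
      have hφn_int : Integrable (φn n) ν := by
        refine integrable_of_bound ν hφnc Mn fun x => ?_
        rw [Real.norm_eq_abs]; exact hMn x
      -- abbreviations
      set A1 : ℝ := ∫ x, ψ x * ⟪Dφn n x, e k⟫ ∂ν with hA1def
      set A2 : ℝ := ∫ x, φn n x * ⟪Dψ x, e k⟫ ∂ν with hA2def
      set AD : ℝ := ∫ x, ⟪ψ x • Dφn n x + φn n x • Dψ x, e k⟫ ∂ν with hADdef
      set C : ℝ := ∫ x, ψ x * ⟪G n x - F x, e k⟫ ∂ν with hCdef
      -- C¹_b bound on the product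
      have hχ : IsC1b (fun x => φn n x * ψ x) (fun x => ψ x • Dφn n x + φn n x • Dψ x) :=
        isC1b_mul (hC1b n) hψ
      have hA := hbound k _ _ hχ
      beta_reduce at hA
      -- hA : |AD| ≤ Ck k * √(∫ (φn n x * ψ x)^2)
      have hsplit : AD = A1 + A2 := by
        rw [hADdef, hA1def, hA2def, ← integral_add i1 i2]
        congr 1; funext x
        rw [inner_add_left, real_inner_smul_left, real_inner_smul_left]
      have hlamA : lam k * A1 = C + I := by
        have h1 : ∫ x, ψ x * ⟪G n x, e k⟫ ∂ν = lam k * A1 := by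
          rw [hA1def, ← integral_const_mul]
          congr 1; funext x
          have h2 : (⟪G n x, e k⟫:ℝ) = lam k * ⟪Dφn n x, e k⟫ := hT_inner (Dφn n x) k
          rw [h2]; ring
        have h3 : ∫ x, ψ x * ⟪G n x, e k⟫ ∂ν = C + I := by
          rw [hCdef, hIdef, ← integral_add i3 hψFk_int]
          congr 1; funext x
          rw [inner_sub_left]; ring
        rw [← h1, h3]
      -- bound on AD via hA
      have hsqrt : Real.sqrt (∫ x, (φn n x * ψ x) ^ 2 ∂ν) ≤ Mψ * t n := by
        have iχ2 : Integrable (fun x => (φn n x * ψ x) ^ 2) ν := by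
          refine integrable_of_bound ν (by fun_prop) ((Mn * Mψ)^2) fun x => ?_
          rw [Real.norm_eq_abs, ← pow_abs]
          refine pow_le_pow_left₀ (abs_nonneg _) ?_ 2
          rw [abs_mul]
          exact mul_le_mul (hMn x) (hMψ x) (abs_nonneg _) hMn0
        have iφ2 : Integrable (fun x => Mψ ^ 2 * φn n x ^ 2) ν := by
          refine Integrable.const_mul ?_ _
          refine integrable_of_bound ν (by fun_prop) (Mn^2) fun x => ?_
          rw [Real.norm_eq_abs, ← pow_abs]
          exact pow_le_pow_left₀ (abs_nonneg _) (hMn x) 2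
        have hmono : ∫ x, (φn n x * ψ x) ^ 2 ∂ν ≤ ∫ x, Mψ ^ 2 * φn n x ^ 2 ∂ν := by
          refine integral_mono iχ2 iφ2 fun x => ?_
          have : (φn n x * ψ x) ^ 2 = φn n x ^ 2 * ψ x ^ 2 := by ring
          rw [this]
          have hψ2 : ψ x ^ 2 ≤ Mψ ^ 2 := by
            rw [← sq_abs]
            exact pow_le_pow_left₀ (abs_nonneg _) (hMψ x) 2
          calc φn n x ^ 2 * ψ x ^ 2 ≤ φn n x ^ 2 * Mψ ^ 2 :=
                mul_le_mul_of_nonneg_left hψ2 (sq_nonneg _)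
            _ = Mψ ^ 2 * φn n x ^ 2 := by ring
        calc Real.sqrt (∫ x, (φn n x * ψ x) ^ 2 ∂ν) ≤ Real.sqrt (∫ x, Mψ ^ 2 * φn n x ^ 2 ∂ν) :=
              Real.sqrt_le_sqrt hmono
          _ = Real.sqrt (Mψ ^ 2 * ∫ x, φn n x ^ 2 ∂ν) := by rw [integral_const_mul]
          _ = Mψ * Real.sqrt (∫ x, φn n x ^ 2 ∂ν) := by
              rw [Real.sqrt_mul (sq_nonneg _), Real.sqrt_sq hMψ0]
          _ = Mψ * t n := by
              rw [show t n = (eLpNorm (φn n) 2 ν).toReal from rfl,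
                ← sqrt_integral_sq_eq ν (hφmem n)]
      have hAD_bd : |AD| ≤ Ck k * (Mψ * t n) :=
        hA.trans (mul_le_mul_of_nonneg_left hsqrt (hCk k))
      -- bound on A2
      have hA2_bd : |A2| ≤ Kψ * t n := by
        have h1 : |A2| ≤ ∫ x, |φn n x * ⟪Dψ x, e k⟫| ∂ν := by
          rw [hA2def]
          simpa only [Real.norm_eq_abs] using norm_integral_le_integral_norm (μ := ν) (fun x => φn n x * ⟪Dψ x, e k⟫)
        have h2 : ∫ x, |φn n x * ⟪Dψ x, e k⟫| ∂ν ≤ ∫ x, Kψ * |φn n x| ∂ν := by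
          refine integral_mono i2.abs (hφn_int.abs.const_mul _) fun x => ?_
          rw [abs_mul]
          calc |φn n x| * |(⟪Dψ x, e k⟫:ℝ)| ≤ |φn n x| * Kψ :=
                mul_le_mul_of_nonneg_left ((hinner_bd _).trans (hKψ x)) (abs_nonneg _)
            _ = Kψ * |φn n x| := by ring
        have h3 : ∫ x, Kψ * |φn n x| ∂ν ≤ Kψ * t n := by
          rw [integral_const_mul]
          refine mul_le_mul_of_nonneg_left ?_ (le_max_right _ _)
          rw [show t n = (eLpNorm (φn n) 2 ν).toReal from rfl]
          exact integral_abs_le_L2 ν (hφmem n)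
        linarith
      -- bound on C
      have hC_bd : |C| ≤ Mψ * s n := by
        have h1 : |C| ≤ ∫ x, |ψ x * ⟪G n x - F x, e k⟫| ∂ν := by
          rw [hCdef]
          simpa only [Real.norm_eq_abs] using norm_integral_le_integral_norm (μ := ν) (fun x => ψ x * ⟪G n x - F x, e k⟫)
        have h2 : ∫ x, |ψ x * ⟪G n x - F x, e k⟫| ∂ν ≤ ∫ x, Mψ * ‖G n x - F x‖ ∂ν := by
          refine integral_mono i3.abs ((hGFint n).norm.const_mul _) fun x => ?_
          rw [abs_mul]
          exact mul_le_mul (hMψ x) (hinner_bd _) (abs_nonneg _) hMψ0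
        have h3 : ∫ x, Mψ * ‖G n x - F x‖ ∂ν ≤ Mψ * s n := by
          rw [integral_const_mul]
          refine mul_le_mul_of_nonneg_left ?_ hMψ0
          have h4 := integral_abs_le_L2 ν (hGFmem n).norm
          rw [eLpNorm_norm] at h4
          rw [show s n = (eLpNorm (fun x => G n x - F x) 2 ν).toReal from rfl]
          simpa [abs_norm] using h4
        linarith
      -- combine
      have hIval : I = lam k * (AD - A2) - C := by
        rw [hsplit]
        have : lam k * (A1 + A2 - A2) = lam k * A1 := by ring
        rw [this, hlamA]
        ring
      rw [hIval]
      have step1 : |lam k * (AD - A2) - C| ≤ |lam k| * (|AD| + |A2|) + |C| := by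
        calc |lam k * (AD - A2) - C| ≤ |lam k * (AD - A2)| + |C| := by
              have := abs_add_le (lam k * (AD - A2)) (-C)
              simpa [sub_eq_add_neg] using this
          _ ≤ |lam k| * (|AD| + |A2|) + |C| := by
              rw [abs_mul]
              have : |AD - A2| ≤ |AD| + |A2| := by
                have := abs_add_le AD (-A2)
                simpa [sub_eq_add_neg] using this
              exact add_le_add_left (mul_le_mul_of_nonneg_left this (abs_nonneg _)) _
      refine step1.trans ?_
      have habs : |AD| + |A2| ≤ Ck k * (Mψ * t n) + Kψ * t n := add_le_add hAD_bd hA2_bd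
      have hnn : (0:ℝ) ≤ Ck k * (Mψ * t n) + Kψ * t n :=
        add_nonneg (mul_nonneg (hCk k) (mul_nonneg hMψ0 (tnonneg n)))
          (mul_nonneg hKψ0 (tnonneg n))
      calc |lam k| * (|AD| + |A2|) + |C|
          ≤ M * (Ck k * (Mψ * t n) + Kψ * t n) + Mψ * s n := by
            refine add_le_add ?_ hC_bd
            exact mul_le_mul (hM k) habs (by positivity) hM0
        _ = M * (Ck k * Mψ + Kψ) * t n + Mψ * s n := by ring
    -- pass to the limit
    have hu : Tendsto (fun n => M * (Ck k * Mψ + Kψ) * t n + Mψ * s n) atTop (𝓝 0) := by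
      have h1 : Tendsto (fun n => M * (Ck k * Mψ + Kψ) * t n) atTop (𝓝 0) := by
        have := ht0.const_mul (M * (Ck k * Mψ + Kψ))
        simpa using this
      have h2 : Tendsto (fun n => Mψ * s n) atTop (𝓝 0) := by
        have := hs0.const_mul Mψ
        simpa using this
      have := h1.add h2
      simpa using this
    have hle : |I| ≤ 0 := ge_of_tendsto' hu bound_n
    have : |I| = 0 := le_antisymm hle (abs_nonneg _)
    exact abs_eq_zero.1 this
  -- STEP 2
  have key2 : ∀ k : ℕ, (fun x => (⟪F x, e k⟫ : ℝ)) =ᵐ[ν] 0 := by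
    intro k
    set g : H → ℝ := fun x => ⟪F x, e k⟫ with hgdef
    have hg_int : Integrable g ν := hinner_int F hFint k
    set gm : H → ℝ := hg_int.1.mk g with hgmdef
    have hgm_meas : StronglyMeasurable gm := hg_int.1.stronglyMeasurable_mk
    have hgm_ae : g =ᵐ[ν] gm := hg_int.1.ae_eq_mk
    have hgm_int : Integrable gm ν := hg_int.congr hgm_ae
    -- tested integrals vanish
    have htest : ∀ (s' : Finset ℕ) (c : ℕ → ℝ) (n : ℕ),
        ∫ x, (∏ i ∈ s', cutfn (c i) n ⟪x, e i⟫) * gm x ∂ν = 0 := by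
      intro s' c n
      obtain ⟨D, hD⟩ := isC1b_prod_exists s' e c n
      have h0 := key1 k _ _ hD
      have heq : ∫ x, (∏ i ∈ s', cutfn (c i) n ⟪x, e i⟫) * gm x ∂ν
          = ∫ x, (∏ i ∈ s', cutfn (c i) n ⟪x, e i⟫) * g x ∂ν := by
        refine integral_congr_ae ?_
        filter_upwards [hgm_ae] with x hx
        rw [hx]
      rw [heq]
      exact h0
    have huniv : ∫ x, gm x ∂ν = 0 := by
      have h0 := key1 k (fun _ => 1) (fun _ => 0) (isC1b_const 1)
      have heq : ∫ x, gm x ∂ν = ∫ x, (1:ℝ) * g x ∂ν := by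
        refine integral_congr_ae ?_
        filter_upwards [hgm_ae] with x hx
        rw [one_mul, hx]
      rw [heq]
      exact h0
    -- set integrals over the π-system vanish
    have hsetint : ∀ S ∈ coordPi b, MeasurableSet S ∧ ∫ x in S, gm x ∂ν = 0 := by
      intro S hS
      have hSmeas : MeasurableSet S := by
        rw [← coordPi_generates b]
        exact MeasurableSpace.measurableSet_generateFrom hS
      refine ⟨hSmeas, ?_⟩
      obtain ⟨s', c, rfl⟩ := hS
      have hSe : {x : H | ∀ i ∈ s', ⟪x, b i⟫ ≤ c i} = {x : H | ∀ i ∈ s', ⟪x, e i⟫ ≤ c i} := by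
        simp only [hbe, hbk]
      rw [hSe] at hSmeas ⊢
      set S : Set H := {x : H | ∀ i ∈ s', ⟪x, e i⟫ ≤ c i} with hSdef
      have hprod_cont : ∀ n : ℕ, Continuous fun x : H => ∏ i ∈ s', cutfn (c i) n ⟪x, e i⟫ := by
        intro n
        refine continuous_finset_prod s' fun i _ => ?_
        exact (cutfn_continuous (c i) n).comp (continuous_id.inner continuous_const)
      have hlim : Tendsto (fun n => ∫ x, (∏ i ∈ s', cutfn (c i) n ⟪x, e i⟫) * gm x ∂ν)
          atTop (𝓝 (∫ x, S.indicator gm x ∂ν)) := by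
        refine tendsto_integral_of_dominated_convergence (fun x => |gm x|)
          (fun n => ((hprod_cont n).aestronglyMeasurable).mul hgm_meas.aestronglyMeasurable)
          hgm_int.abs (fun n => ?_) ?_
        · filter_upwards [] with x
          rw [Real.norm_eq_abs, abs_mul]
          have h01 : |∏ i ∈ s', cutfn (c i) n ⟪x, e i⟫| ≤ 1 := by
            rw [abs_of_nonneg (Finset.prod_nonneg fun i _ => cutfn_nonneg _ _ _)]
            exact Finset.prod_le_one (fun i _ => cutfn_nonneg _ _ _) fun i _ => cutfn_le_one _ _ _
          calc |∏ i ∈ s', cutfn (c i) n ⟪x, e i⟫| * |gm x| ≤ 1 * |gm x| :=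
                mul_le_mul_of_nonneg_right h01 (abs_nonneg _)
            _ = |gm x| := one_mul _
        · filter_upwards [] with x
          have hfac : ∀ i ∈ s', Tendsto (fun n => cutfn (c i) n ⟪x, e i⟫) atTop
              (𝓝 (if (⟪x, e i⟫:ℝ) ≤ c i then 1 else 0)) := fun i _ => cutfn_tendsto _ _
          have hmul := (tendsto_finset_prod s' hfac).mul_const (gm x)
          have hval : S.indicator gm x
              = (∏ i ∈ s', if (⟪x, e i⟫:ℝ) ≤ c i then (1:ℝ) else 0) * gm x := by
            by_cases hx : x ∈ S
            · rw [Set.indicator_of_mem hx]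
              have : (∏ i ∈ s', if (⟪x, e i⟫:ℝ) ≤ c i then (1:ℝ) else 0) = 1 :=
                Finset.prod_eq_one fun i hi => if_pos (hx i hi)
              rw [this, one_mul]
            · rw [Set.indicator_of_notMem hx]
              have hx' : ∃ i ∈ s', ¬ ((⟪x, e i⟫:ℝ) ≤ c i) := by
                by_contra hcon
                push_neg at hcon
                exact hx fun i hi => hcon i hi
              obtain ⟨i, hi, hlt⟩ := hx'
              have : (∏ i ∈ s', if (⟪x, e i⟫:ℝ) ≤ c i then (1:ℝ) else 0) = 0 :=
                Finset.prod_eq_zero hi (if_neg hlt)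
              rw [this, zero_mul]
          rw [hval]
          exact hmul
      have hconst : Tendsto (fun n => ∫ x, (∏ i ∈ s', cutfn (c i) n ⟪x, e i⟫) * gm x ∂ν)
          atTop (𝓝 0) := by
        have : (fun n => ∫ x, (∏ i ∈ s', cutfn (c i) n ⟪x, e i⟫) * gm x ∂ν)
            = fun _ => (0:ℝ) := funext fun n => htest s' c n
        rw [this]
        exact tendsto_const_nhds
      have hind : ∫ x, S.indicator gm x ∂ν = 0 := tendsto_nhds_unique hlim hconst
      rwa [integral_indicator hSmeas] at hind
    -- measures with densities gm⁺ and gm⁻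
    have hgm_meas' : Measurable gm := hgm_meas.measurable
    set μp : Measure H := ν.withDensity (fun x => ENNReal.ofReal (gm x)) with hμpdef
    set μm : Measure H := ν.withDensity (fun x => ENNReal.ofReal (-gm x)) with hμmdef
    have hofr : ∀ x : H, ENNReal.ofReal (gm x) ≤ ‖gm x‖ₑ := by
      intro x
      rw [Real.enorm_eq_ofReal_abs]
      exact ENNReal.ofReal_le_ofReal (le_abs_self _)
    have hofr' : ∀ x : H, ENNReal.ofReal (-gm x) ≤ ‖gm x‖ₑ := by
      intro x
      rw [Real.enorm_eq_ofReal_abs]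
      exact ENNReal.ofReal_le_ofReal (neg_le_abs _)
    haveI hfinp : IsFiniteMeasure μp := by
      refine isFiniteMeasure_withDensity ?_
      exact ((lintegral_mono hofr).trans_lt hgm_int.2).ne
    haveI hfinm : IsFiniteMeasure μm := by
      refine isFiniteMeasure_withDensity ?_
      exact ((lintegral_mono hofr').trans_lt hgm_int.2).ne
    have hrel : ∀ A : Set H, MeasurableSet A → (∫ x in A, gm x ∂ν = 0 ↔ μp A = μm A) := by
      intro A hA
      have h1 : ∫ x in A, gm x ∂ν = (μp A).toReal - (μm A).toReal := by
        rw [integral_eq_lintegral_pos_part_sub_lintegral_neg_part (hgm_int.restrict (s := A)),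
          hμpdef, hμmdef, withDensity_apply _ hA, withDensity_apply _ hA]
      constructor
      · intro h0
        rw [h1, sub_eq_zero] at h0
        exact (ENNReal.toReal_eq_toReal_iff' (measure_ne_top μp A) (measure_ne_top μm A)).1 h0
      · intro h
        rw [h1, h, sub_self]
    have hμeq : μp = μm := by
      refine ext_of_generate_finite (coordPi b) ((coordPi_generates b).symm)
        (coordPi_isPiSystem b) (fun S hS => ?_) ?_
      · obtain ⟨hSm, hS0⟩ := hsetint S hS
        exact (hrel S hSm).1 hS0
      · have h0 : ∫ x in Set.univ, gm x ∂ν = 0 := by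
          rw [setIntegral_univ]
          exact huniv
        exact (hrel _ MeasurableSet.univ).1 h0
    have hgm0 : gm =ᵐ[ν] 0 := by
      refine hgm_int.ae_eq_zero_of_forall_setIntegral_eq_zero fun A hA _ => ?_
      exact (hrel A hA).2 (by rw [hμeq])
    exact hgm_ae.trans hgm0
  -- conclusion
  have hae : ∀ᵐ x ∂ν, ∀ k, (⟪F x, e k⟫ : ℝ) = 0 := by
    rw [ae_all_iff]
    intro k
    filter_upwards [key2 k] with x hx
    exact hx
  filter_upwards [hae] with x hx
  have hrepr0 : b.repr (F x) = 0 := by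
    apply lp.ext
    funext k
    rw [b.repr_apply_apply, lp.coeFn_zero, Pi.zero_apply]
    simp only [hbe, hbk]
    rw [real_inner_comm]
    exact hx k
  exact b.repr.map_eq_zero_iff.1 hrepr0
end

section
/- (Density of trigonometric cylindrical functions.) Let H be a real separable Hilbert space and let ν be a finite Borel measure on H. Then the real linear span of the functions x ↦ cos⟨h, x⟩ and x ↦ sin⟨h, x⟩, for h ranging over H, is dense in L²(H,ν). -/
open MeasureTheory
open scoped RealInnerProductSpace

section Auxiliary

open Filter
open scoped ENNReal

/-- **Ulam tightness**: a finite Borel measure on a complete separable metric space is tight. -/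
lemma ulam_tight {H : Type*} [MetricSpace H] [CompleteSpace H] [SecondCountableTopology H]
    [Nonempty H] [MeasurableSpace H] [OpensMeasurableSpace H]
    (ν : Measure H) [IsFiniteMeasure ν] {η : ℝ≥0∞} (hη : 0 < η) (hη' : η ≠ ∞) :
    ∃ K : Set H, IsCompact K ∧ ν Kᶜ < η := by
  obtain ⟨x, hx⟩ := TopologicalSpace.exists_dense_seq H
  set B : ℕ → ℕ → Set H := fun n m => ⋃ i ∈ Finset.range m, Metric.closedBall (x i) (1/(n+1))
  have hBclosed : ∀ n m, IsClosed (B n m) := fun n m =>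
    isClosed_biUnion_finset fun i _ => Metric.isClosed_closedBall
  have key : ∀ n : ℕ, ∃ m : ℕ, ν (B n m)ᶜ < η/2 * 2⁻¹ ^ (n+1) := by
    intro n
    have hmono : Antitone fun m => (B n m)ᶜ := by
      intro a b hab
      apply Set.compl_subset_compl.2
      refine Set.iUnion₂_subset fun i hi =>
        Set.subset_biUnion_of_mem (u := fun i => Metric.closedBall (x i) (1/(n+1)))
          (Finset.mem_range.2 (lt_of_lt_of_le (Finset.mem_range.1 hi) hab))
    have hiInter : ⋂ m, (B n m)ᶜ = ∅ := by
      rw [Set.eq_empty_iff_forall_notMem]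
      intro y hy
      obtain ⟨i, hi⟩ := hx.exists_dist_lt y (by positivity : (0:ℝ) < 1/(n+1))
      have : y ∈ B n (i+1) := by
        apply Set.mem_biUnion (Finset.self_mem_range_succ i)
        exact Metric.mem_closedBall.2 hi.le
      exact (Set.mem_iInter.1 hy (i+1)) this
    have htends : Tendsto (fun m => ν (B n m)ᶜ) atTop (nhds 0) := by
      have := tendsto_measure_iInter_atTop (μ := ν) (s := fun m => (B n m)ᶜ)
        (fun m => ((hBclosed n m).measurableSet.compl).nullMeasurableSet) hmono
        ⟨0, measure_ne_top ν _⟩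
      rwa [hiInter, measure_empty] at this
    have hpos : (0:ℝ≥0∞) < η/2 * 2⁻¹ ^ (n+1) := by
      apply ENNReal.mul_pos
      · exact (ENNReal.div_pos hη.ne' (by norm_num)).ne'
      · exact pow_ne_zero _ (by norm_num)
    exact ((tendsto_order.1 htends).2 _ hpos).exists
  choose m hm using key
  refine ⟨⋂ n, B n (m n), ?_, ?_⟩
  · apply TotallyBounded.isCompact_of_isClosed
    · rw [Metric.totallyBounded_iff]
      intro ε hε
      obtain ⟨n, hn⟩ := exists_nat_one_div_lt (hε)
      refine ⟨x '' ↑(Finset.range (m n)), (Finset.range (m n)).finite_toSet.image x, ?_⟩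
      intro y hy
      have hy' : y ∈ B n (m n) := Set.mem_iInter.1 hy n
      obtain ⟨i, hi, hyi⟩ := Set.mem_iUnion₂.1 hy'
      refine Set.mem_biUnion (Set.mem_image_of_mem x (by simpa using hi)) ?_
      have : dist y (x i) ≤ 1/(n+1) := Metric.mem_closedBall.1 hyi
      exact Metric.mem_ball.2 (lt_of_le_of_lt this hn)
    · exact isClosed_iInter fun n => hBclosed n (m n)
  · rw [Set.compl_iInter]
    calc ν (⋃ n, (B n (m n))ᶜ) ≤ ∑' n, ν (B n (m n))ᶜ := measure_iUnion_le _
      _ ≤ ∑' n : ℕ, η/2 * 2⁻¹ ^ (n+1) := ENNReal.tsum_le_tsum fun n => (hm n).le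
      _ = η/2 := by
          rw [ENNReal.tsum_mul_left]
          have : ∑' n : ℕ, (2⁻¹:ℝ≥0∞) ^ (n+1) = 1 := by
            simp only [pow_succ]
            rw [ENNReal.tsum_mul_right, ENNReal.tsum_geometric, ENNReal.one_sub_inv_two, inv_inv,
              ENNReal.mul_inv_cancel (by norm_num) (by norm_num)]
          rw [this, mul_one]
      _ < η := ENNReal.half_lt_self hη.ne' hη'


variable {H : Type*} [NormedAddCommGroup H] [InnerProductSpace ℝ H]

/-- The set of trigonometric cylindrical generator functions. -/
def trigSet (H : Type*) [NormedAddCommGroup H] [InnerProductSpace ℝ H] : Set (H → ℝ) :=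
  {ψ : H → ℝ | ∃ h : H, ψ = fun x => Real.cos ⟪h, x⟫} ∪
  {ψ : H → ℝ | ∃ h : H, ψ = fun x => Real.sin ⟪h, x⟫}

lemma cos_mem_trigSpan (h : H) :
    (fun x => Real.cos ⟪h, x⟫) ∈ Submodule.span ℝ (trigSet H) :=
  Submodule.subset_span (Or.inl ⟨h, rfl⟩)

lemma sin_mem_trigSpan (h : H) :
    (fun x => Real.sin ⟪h, x⟫) ∈ Submodule.span ℝ (trigSet H) :=
  Submodule.subset_span (Or.inr ⟨h, rfl⟩)

lemma one_mem_trigSpan : (1 : H → ℝ) ∈ Submodule.span ℝ (trigSet H) := by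
  have : (1 : H → ℝ) = fun x => Real.cos ⟪(0:H), x⟫ := by
    funext x; simp
  rw [this]; exact cos_mem_trigSpan 0

lemma gen_mul_mem_trigSpan {f g : H → ℝ} (hf : f ∈ trigSet H) (hg : g ∈ trigSet H) :
    f * g ∈ Submodule.span ℝ (trigSet H) := by
  have key : ∀ a b : H, ∀ u v : ℝ → ℝ,
      ((fun x => u ⟪a,x⟫) * fun x => v ⟪b,x⟫) =
        (fun x : H => u ⟪a,x⟫ * v ⟪b,x⟫) := fun _ _ _ _ => rfl
  rcases hf with ⟨a, rfl⟩ | ⟨a, rfl⟩ <;> rcases hg with ⟨b, rfl⟩ | ⟨b, rfl⟩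
  · have : ((fun x : H => Real.cos ⟪a,x⟫) * fun x => Real.cos ⟪b,x⟫)
        = (2⁻¹ : ℝ) • (fun x : H => Real.cos ⟪a-b, x⟫) +
          (2⁻¹ : ℝ) • (fun x : H => Real.cos ⟪a+b, x⟫) := by
      funext x
      simp only [Pi.mul_apply, Pi.add_apply, Pi.smul_apply, smul_eq_mul,
        inner_sub_left, inner_add_left, Real.cos_add, Real.cos_sub]
      ring
    rw [this]
    exact Submodule.add_mem _ (Submodule.smul_mem _ _ (cos_mem_trigSpan _))
      (Submodule.smul_mem _ _ (cos_mem_trigSpan _))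
  · have : ((fun x : H => Real.cos ⟪a,x⟫) * fun x => Real.sin ⟪b,x⟫)
        = (2⁻¹ : ℝ) • (fun x : H => Real.sin ⟪a+b, x⟫) +
          (-2⁻¹ : ℝ) • (fun x : H => Real.sin ⟪a-b, x⟫) := by
      funext x
      simp only [Pi.mul_apply, Pi.add_apply, Pi.smul_apply, smul_eq_mul,
        inner_sub_left, inner_add_left, Real.sin_add, Real.sin_sub]
      ring
    rw [this]
    exact Submodule.add_mem _ (Submodule.smul_mem _ _ (sin_mem_trigSpan _))
      (Submodule.smul_mem _ _ (sin_mem_trigSpan _))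
  · have : ((fun x : H => Real.sin ⟪a,x⟫) * fun x => Real.cos ⟪b,x⟫)
        = (2⁻¹ : ℝ) • (fun x : H => Real.sin ⟪a+b, x⟫) +
          (2⁻¹ : ℝ) • (fun x : H => Real.sin ⟪a-b, x⟫) := by
      funext x
      simp only [Pi.mul_apply, Pi.add_apply, Pi.smul_apply, smul_eq_mul,
        inner_sub_left, inner_add_left, Real.sin_add, Real.sin_sub]
      ring
    rw [this]
    exact Submodule.add_mem _ (Submodule.smul_mem _ _ (sin_mem_trigSpan _))
      (Submodule.smul_mem _ _ (sin_mem_trigSpan _))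
  · have : ((fun x : H => Real.sin ⟪a,x⟫) * fun x => Real.sin ⟪b,x⟫)
        = (2⁻¹ : ℝ) • (fun x : H => Real.cos ⟪a-b, x⟫) +
          (-2⁻¹ : ℝ) • (fun x : H => Real.cos ⟪a+b, x⟫) := by
      funext x
      simp only [Pi.mul_apply, Pi.add_apply, Pi.smul_apply, smul_eq_mul,
        inner_sub_left, inner_add_left, Real.cos_add, Real.cos_sub]
      ring
    rw [this]
    exact Submodule.add_mem _ (Submodule.smul_mem _ _ (cos_mem_trigSpan _))
      (Submodule.smul_mem _ _ (cos_mem_trigSpan _))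

lemma mul_mem_trigSpan {f g : H → ℝ} (hf : f ∈ Submodule.span ℝ (trigSet H))
    (hg : g ∈ Submodule.span ℝ (trigSet H)) :
    f * g ∈ Submodule.span ℝ (trigSet H) := by
  induction hf using Submodule.span_induction with
  | mem f' hf' =>
    induction hg using Submodule.span_induction with
    | mem g' hg' => exact gen_mul_mem_trigSpan hf' hg'
    | zero => simpa using Submodule.zero_mem _
    | add u v hu hv hu' hv' => rw [mul_add]; exact Submodule.add_mem _ hu' hv'
    | smul a u hu hu' => rw [mul_smul_comm]; exact Submodule.smul_mem _ _ hu'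
  | zero => simpa using Submodule.zero_mem _
  | add u v hu hv hu' hv' => rw [add_mul]; exact Submodule.add_mem _ hu' hv'
  | smul a u hu hu' => rw [smul_mul_assoc]; exact Submodule.smul_mem _ _ hu'

lemma pow_mem_trigSpan {f : H → ℝ} (hf : f ∈ Submodule.span ℝ (trigSet H)) (n : ℕ) :
    f ^ n ∈ Submodule.span ℝ (trigSet H) := by
  induction n with
  | zero => simpa using one_mem_trigSpan
  | succ n ih => rw [pow_succ]; exact mul_mem_trigSpan ih hf

lemma poly_mem_trigSpan {f : H → ℝ} (hf : f ∈ Submodule.span ℝ (trigSet H)) (q : Polynomial ℝ) :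
    (fun x => q.eval (f x)) ∈ Submodule.span ℝ (trigSet H) := by
  induction q using Polynomial.induction_on' with
  | add p r hp hr =>
    have : (fun x => (p + r).eval (f x)) = (fun x => p.eval (f x)) + fun x => r.eval (f x) := by
      funext x; simp [Polynomial.eval_add]
    rw [this]; exact Submodule.add_mem _ hp hr
  | monomial n a =>
    have : (fun x => (Polynomial.monomial n a).eval (f x)) = a • f ^ n := by
      funext x; simp [Polynomial.eval_monomial, mul_comm]
    rw [this]; exact Submodule.smul_mem _ _ (pow_mem_trigSpan hf n)

lemma bounded_of_mem_trigSpan {f : H → ℝ} (hf : f ∈ Submodule.span ℝ (trigSet H)) :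
    ∃ C : ℝ, 0 ≤ C ∧ ∀ x, |f x| ≤ C := by
  induction hf using Submodule.span_induction with
  | mem f' hf' =>
    refine ⟨1, zero_le_one, fun x => ?_⟩
    rcases hf' with ⟨a, rfl⟩ | ⟨a, rfl⟩
    · exact Real.abs_cos_le_one _
    · exact Real.abs_sin_le_one _
  | zero => exact ⟨0, le_refl _, fun x => by simp⟩
  | add u v hu hv hu' hv' =>
    obtain ⟨C₁, hC₁, h₁⟩ := hu'
    obtain ⟨C₂, hC₂, h₂⟩ := hv'
    exact ⟨C₁ + C₂, by linarith, fun x =>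
      (abs_add_le _ _).trans (add_le_add (h₁ x) (h₂ x))⟩
  | smul a u hu hu' =>
    obtain ⟨C, hC, h⟩ := hu'
    exact ⟨|a| * C, by positivity, fun x => by
      simp only [Pi.smul_apply, smul_eq_mul, abs_mul]
      exact mul_le_mul_of_nonneg_left (h x) (abs_nonneg a)⟩


/-- Bundled continuous map `x ↦ cos ⟪h, x⟫`. -/
noncomputable def cosMap (h : H) : C(H, ℝ) :=
  ⟨fun x => Real.cos ⟪h, x⟫, Real.continuous_cos.comp (continuous_const.inner continuous_id)⟩

noncomputable def sinMap (h : H) : C(H, ℝ) :=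
  ⟨fun x => Real.sin ⟪h, x⟫, Real.continuous_sin.comp (continuous_const.inner continuous_id)⟩

def trigCSet (H : Type*) [NormedAddCommGroup H] [InnerProductSpace ℝ H] : Set C(H, ℝ) :=
  {f | ∃ h : H, f = cosMap h} ∪ {f | ∃ h : H, f = sinMap h}

-- if cos and sin both agree at a, a+1, contradiction
lemma cos_sin_sep {a b : ℝ} (hab : a - b = 1) :
    Real.cos a ≠ Real.cos b ∨ Real.sin a ≠ Real.sin b := by
  by_contra hcon
  push_neg at hcon
  obtain ⟨hc, hs⟩ := hcon
  have h1 : Real.cos (a - b) = 1 := by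
    rw [Real.cos_sub, hc, hs]
    rw [← Real.sin_sq_add_cos_sq b]; ring
  rw [hab] at h1
  obtain ⟨n, hn⟩ := (Real.cos_eq_one_iff 1).1 h1
  have hπ := Real.pi_gt_three
  have hn0 : (0:ℝ) < n := by nlinarith
  have hn0' : (1:ℤ) ≤ n := by exact_mod_cast hn0
  have hn1 : (1:ℝ) ≤ n := by exact_mod_cast hn0'
  nlinarith

/-- Members of the adjoin-subalgebra have coercions in the span. -/
lemma adjoin_coe_mem_span {f : C(H, ℝ)} (hf : f ∈ Algebra.adjoin ℝ (trigCSet H)) :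
    ⇑f ∈ Submodule.span ℝ (trigSet H) := by
  induction hf using Algebra.adjoin_induction with
  | mem f' hf' =>
    rcases hf' with ⟨h, rfl⟩ | ⟨h, rfl⟩
    · exact Submodule.subset_span (Or.inl ⟨h, rfl⟩)
    · exact Submodule.subset_span (Or.inr ⟨h, rfl⟩)
  | algebraMap r =>
    have : ⇑(algebraMap ℝ C(H, ℝ) r) = r • (1 : H → ℝ) := by
      funext x; simp [Algebra.algebraMap_eq_smul_one]
    rw [this]
    refine Submodule.smul_mem _ _ ?_
    have h1 : (1 : H → ℝ) = fun x => Real.cos ⟪(0:H), x⟫ := by funext x; simp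
    rw [h1]; exact Submodule.subset_span (Or.inl ⟨0, rfl⟩)
  | add u v hu hv hu' hv' =>
    rw [ContinuousMap.coe_add]; exact Submodule.add_mem _ hu' hv'
  | mul u v hu hv hu' hv' =>
    rw [ContinuousMap.coe_mul]
    exact mul_mem_trigSpan hu' hv'


end Auxiliary

open scoped ENNReal

/-- **Density of trigonometric cylindrical functions.** In a real separable
Hilbert space `H` with a finite Borel measure `ν`, the real linear span of the
functions `x ↦ cos ⟨h, x⟩` and `x ↦ sin ⟨h, x⟩`, `h ∈ H`, is dense in
`L²(H,ν)`: any `g ∈ L²(H,ν)` can be approximated in the `L²(ν)`-norm by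
elements of this span. -/
theorem trig_cylindrical_dense
    {H : Type*} [NormedAddCommGroup H] [InnerProductSpace ℝ H] [CompleteSpace H]
    [SecondCountableTopology H] [MeasurableSpace H] [BorelSpace H]
    (ν : Measure H) [IsFiniteMeasure ν]
    (g : H → ℝ) (hg : MemLp g 2 ν) :
    ∀ ε : ℝ, 0 < ε →
      ∃ φ ∈ Submodule.span ℝ
          ({ψ : H → ℝ | ∃ h : H, ψ = fun x => Real.cos ⟪h, x⟫} ∪
           {ψ : H → ℝ | ∃ h : H, ψ = fun x => Real.sin ⟪h, x⟫}),
        eLpNorm (fun x => g x - φ x) 2 ν < ENNReal.ofReal ε := by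
  intro ε hε
  haveI : Nonempty H := ⟨0⟩
  -- Step 1 : bounded continuous approximation
  obtain ⟨fb, hfb, hfbmem⟩ := hg.exists_boundedContinuous_eLpNorm_sub_le
    (by norm_num : (2:ℝ≥0∞) ≠ ∞) (ε := ENNReal.ofReal (ε/4))
    (ENNReal.ofReal_pos.2 (by linarith : (0:ℝ) < ε/4)).ne'
  set M : ℝ := ‖fb‖ with hM
  have hM0 : 0 ≤ M := norm_nonneg _
  have hfbM : ∀ x, |fb x| ≤ M := fun x => fb.norm_coe_le_norm x
  -- Step 2 : compact set with small complement
  set r : ℝ := ε / (8 * (M + 1)) with hr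
  have hr0 : 0 < r := by positivity
  obtain ⟨K, hK, hKc⟩ := ulam_tight ν (η := ENNReal.ofReal r ^ 2)
    (ENNReal.pow_pos (ENNReal.ofReal_pos.2 hr0) 2) (ENNReal.pow_ne_top ENNReal.ofReal_ne_top)
  have hKclosed : IsClosed K := hK.isClosed
  have : CompactSpace K := isCompact_iff_compactSpace.mp hK
  -- Step 3 : Stone–Weierstrass on K
  set A' : Subalgebra ℝ C(H, ℝ) := Algebra.adjoin ℝ (trigCSet H) with hA'
  set ρ : C(H, ℝ) →ₐ[ℝ] C(K, ℝ) :=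
    ContinuousMap.compRightAlgHom ℝ ℝ ⟨(Subtype.val : K → H), continuous_subtype_val⟩ with hρ
  set B : Subalgebra ℝ C(K, ℝ) := A'.map ρ with hB
  have hsep : B.SeparatesPoints := by
    intro p q hpq
    have hpq' : (p : H) ≠ (q : H) := fun hc => hpq (Subtype.ext hc)
    set u : H := (p : H) - (q : H) with hu
    have hu0 : u ≠ 0 := sub_ne_zero.2 hpq'
    set h : H := (‖u‖ ^ 2)⁻¹ • u with hh
    have hinner : ⟪h, (p:H)⟫ - ⟪h, (q:H)⟫ = 1 := by
      have hun : ‖u‖ ≠ 0 := norm_ne_zero_iff.2 hu0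
      rw [← inner_sub_right]
      have : (p:H) - (q:H) = u := rfl
      rw [this, hh, real_inner_smul_left, real_inner_self_eq_norm_sq]
      field_simp
    rcases cos_sin_sep hinner with hc | hc
    · refine ⟨_, ⟨ρ (cosMap h), ⟨Subalgebra.mem_map.2
        ⟨cosMap h, Algebra.subset_adjoin (Or.inl ⟨h, rfl⟩), rfl⟩, rfl⟩⟩, hc⟩
    · refine ⟨_, ⟨ρ (sinMap h), ⟨Subalgebra.mem_map.2
        ⟨sinMap h, Algebra.subset_adjoin (Or.inr ⟨h, rfl⟩), rfl⟩, rfl⟩⟩, hc⟩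
  -- choose δ
  set V : ℝ≥0∞ := ν Set.univ ^ ((2:ℝ)⁻¹) with hV
  have hVne : V ≠ ∞ := ENNReal.rpow_ne_top_of_nonneg (by norm_num) (measure_ne_top ν _)
  set Vt : ℝ := V.toReal with hVt
  have hVt0 : 0 ≤ Vt := ENNReal.toReal_nonneg
  set δ : ℝ := min 1 (ε / (8 * (Vt + 1))) with hδ
  have hδ0 : 0 < δ := lt_min one_pos (by positivity)
  have hδ1 : δ ≤ 1 := min_le_left _ _
  have hδ2 : δ ≤ ε / (8 * (Vt + 1)) := min_le_right _ _
  obtain ⟨gse, hgse⟩ := ContinuousMap.exists_mem_subalgebra_near_continuous_of_separatesPoints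
    B hsep (fun k : K => fb k) (fb.continuous.comp continuous_subtype_val) δ hδ0
  obtain ⟨φc, hφcA, hφceq⟩ := Subalgebra.mem_map.1 gse.2
  have hφ₀span : ⇑φc ∈ Submodule.span ℝ (trigSet H) := adjoin_coe_mem_span hφcA
  obtain ⟨C, hC0, hCb⟩ := bounded_of_mem_trigSpan hφ₀span
  -- on K, φc is within δ of fb
  have hφcK : ∀ x (hx : x ∈ K), |φc x - fb x| < δ := by
    intro x hx
    have := hgse ⟨x, hx⟩
    rw [← hφceq] at this
    simpa [hρ, Real.norm_eq_abs] using this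
  -- clamp and polynomial
  set clamp : ℝ → ℝ := fun t => max (-M) (min M t) with hclamp
  have hclamp_cont : Continuous clamp :=
    continuous_const.max (continuous_const.min continuous_id)
  have hclamp_bdd : ∀ t, |clamp t| ≤ M := by
    intro t
    rw [abs_le]
    constructor
    · exact le_max_left _ _
    · exact max_le (by linarith) (min_le_left _ _)
  have hclamp_lip : ∀ s t, |clamp s - clamp t| ≤ |s - t| := by
    intro s t
    have h1 : |min M s - min M t| ≤ |s - t| := by
      have h := abs_max_sub_max_le_abs (-s) (-t) (-M)
      have e1 : ∀ a : ℝ, min M a = -max (-a) (-M) := fun a => by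
        rw [max_neg_neg, neg_neg, min_comm]
      rw [e1 s, e1 t, show -max (-s) (-M) - -max (-t) (-M)
          = -(max (-s) (-M) - max (-t) (-M)) by ring, abs_neg]
      calc |max (-s) (-M) - max (-t) (-M)| ≤ |-s - -t| := h
        _ = |s - t| := by rw [show -s - -t = -(s-t) by ring, abs_neg]
    have h2 : |clamp s - clamp t| ≤ |min M s - min M t| := by
      simp only [hclamp]
      rw [max_comm (-M) (min M s), max_comm (-M) (min M t)]
      exact abs_max_sub_max_le_abs _ _ _
    exact h2.trans h1
  have hclamp_fb : ∀ x, clamp (fb x) = fb x := by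
    intro x
    have := hfbM x
    rw [abs_le] at this
    simp only [hclamp]
    rw [min_eq_right this.2, max_eq_right this.1]
  obtain ⟨q, hq⟩ := exists_polynomial_near_of_continuousOn (-C) C clamp
    hclamp_cont.continuousOn δ hδ0
  set φ : H → ℝ := fun x => q.eval (φc x) with hφ
  have hφspan : φ ∈ Submodule.span ℝ (trigSet H) := poly_mem_trigSpan hφ₀span q
  -- global bound on φ
  have hφbdd : ∀ x, |φ x| ≤ M + δ := by
    intro x
    have hmem : φc x ∈ Set.Icc (-C) C := by
      have := hCb x; rw [abs_le] at this; exact ⟨this.1, this.2⟩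
    have h1 := (hq _ hmem).le
    calc |φ x| ≤ |q.eval (φc x) - clamp (φc x)| + |clamp (φc x)| := by
          simpa [hφ] using abs_add_le (q.eval (φc x) - clamp (φc x)) (clamp (φc x))
      _ ≤ δ + M := add_le_add h1 (hclamp_bdd _)
      _ = M + δ := by ring
  -- bound on K
  have hφK : ∀ x ∈ K, |fb x - φ x| ≤ 2*δ := by
    intro x hx
    have hmem : φc x ∈ Set.Icc (-C) C := by
      have := hCb x; rw [abs_le] at this; exact ⟨this.1, this.2⟩
    have h1 := (hq _ hmem).le
    have h2 : |clamp (φc x) - fb x| ≤ |φc x - fb x| := by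
      conv_lhs => rw [show fb x = clamp (fb x) from (hclamp_fb x).symm]
      exact hclamp_lip _ _
    have h3 := (hφcK x hx).le
    calc |fb x - φ x| ≤ |clamp (φc x) - q.eval (φc x)| + |fb x - clamp (φc x)| := by
          have := abs_add_le (fb x - clamp (φc x)) (clamp (φc x) - q.eval (φc x))
          simp only [hφ]
          calc |fb x - q.eval (φc x)|
              = |(fb x - clamp (φc x)) + (clamp (φc x) - q.eval (φc x))| := by ring_nf
            _ ≤ |fb x - clamp (φc x)| + |clamp (φc x) - q.eval (φc x)| := abs_add_le _ _
            _ = |clamp (φc x) - q.eval (φc x)| + |fb x - clamp (φc x)| := by ring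
      _ ≤ δ + δ := by
          refine add_le_add ?_ ?_
          · rw [abs_sub_comm]; exact h1
          · rw [abs_sub_comm]; exact h2.trans h3
      _ = 2*δ := by ring
  -- global bound on fb - φ
  have hφG : ∀ x, |fb x - φ x| ≤ 2*M + 1 := by
    intro x
    calc |fb x - φ x| ≤ |fb x| + |φ x| := abs_sub _ _
      _ ≤ M + (M + δ) := add_le_add (hfbM x) (hφbdd x)
      _ ≤ 2*M + 1 := by linarith
  -- measurability
  have hφcont : Continuous φ := q.continuous_aeval.comp φc.continuous
  have hfbAE : AEStronglyMeasurable (⇑fb) ν := fb.continuous.aestronglyMeasurable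
  have hφAE : AEStronglyMeasurable φ ν := hφcont.aestronglyMeasurable
  -- eLpNorm estimates
  have hKmeas : MeasurableSet K := hKclosed.measurableSet
  have hsplit : (fun x => fb x - φ x) =
      K.indicator (fun x => fb x - φ x) + Kᶜ.indicator (fun x => fb x - φ x) :=
    (Set.indicator_self_add_compl K _).symm
  have estK : eLpNorm (K.indicator (fun x => fb x - φ x)) 2 ν ≤ ENNReal.ofReal (ε/4) := by
    have hbd : ∀ᵐ x ∂ν, ‖K.indicator (fun x => fb x - φ x) x‖ ≤ 2*δ := by
      filter_upwards with x
      rw [Real.norm_eq_abs]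
      by_cases hx : x ∈ K
      · rw [Set.indicator_of_mem hx]; exact hφK x hx
      · rw [Set.indicator_of_notMem hx]; simp; positivity
    calc eLpNorm (K.indicator (fun x => fb x - φ x)) 2 ν
        ≤ ν Set.univ ^ (2:ℝ≥0∞).toReal⁻¹ * ENNReal.ofReal (2*δ) :=
          eLpNorm_le_of_ae_bound hbd
      _ = V * ENNReal.ofReal (2*δ) := by congr 1
      _ ≤ ENNReal.ofReal (Vt + 1) * ENNReal.ofReal (2*δ) := by
          gcongr
          rw [hVt, ← ENNReal.ofReal_toReal hVne]
          exact ENNReal.ofReal_le_ofReal (by simp)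
      _ = ENNReal.ofReal ((Vt + 1) * (2*δ)) := by
          rw [ENNReal.ofReal_mul (by positivity : (0:ℝ) ≤ Vt + 1)]
      _ ≤ ENNReal.ofReal (ε/4) := by
          apply ENNReal.ofReal_le_ofReal
          have h2 : (Vt+1) * (2*δ) ≤ (Vt+1) * (2*(ε / (8 * (Vt + 1)))) := by
            apply mul_le_mul_of_nonneg_left _ (by positivity)
            linarith
          calc (Vt + 1) * (2*δ) ≤ (Vt+1) * (2*(ε / (8 * (Vt + 1)))) := h2
            _ = ε/4 := by field_simp; ring
  have estKc : eLpNorm (Kᶜ.indicator (fun x => fb x - φ x)) 2 ν ≤ ENNReal.ofReal (ε/4) := by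
    have hmono : ∀ x, ‖Kᶜ.indicator (fun x => fb x - φ x) x‖ ≤
        ‖Kᶜ.indicator (fun _ => (2*M+1 : ℝ)) x‖ := by
      intro x
      by_cases hx : x ∈ Kᶜ
      · rw [Set.indicator_of_mem hx, Set.indicator_of_mem hx, Real.norm_eq_abs,
          Real.norm_eq_abs]
        rw [abs_of_nonneg (show (0:ℝ) ≤ 2*M+1 by linarith)]
        exact hφG x
      · rw [Set.indicator_of_notMem hx, Set.indicator_of_notMem hx]
    calc eLpNorm (Kᶜ.indicator (fun x => fb x - φ x)) 2 ν
        ≤ eLpNorm (Kᶜ.indicator (fun _ => (2*M+1 : ℝ))) 2 ν := eLpNorm_mono hmono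
      _ = ‖(2*M+1 : ℝ)‖₊ * ν Kᶜ ^ (1/(2:ℝ≥0∞).toReal) :=
          eLpNorm_indicator_const hKmeas.compl (by norm_num) (by norm_num)
      _ ≤ ENNReal.ofReal (2*(M+1)) * (ENNReal.ofReal r ^ 2 : ℝ≥0∞) ^ (1/(2:ℝ≥0∞).toReal) := by
          gcongr
          · rw [← enorm_eq_nnnorm, Real.enorm_eq_ofReal (by linarith : (0:ℝ) ≤ 2*M+1)]
            exact ENNReal.ofReal_le_ofReal (by linarith)
      _ = ENNReal.ofReal (2*(M+1)) * ENNReal.ofReal r := by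
          congr 1
          rw [← ENNReal.rpow_natCast (ENNReal.ofReal r) 2, ← ENNReal.rpow_mul]
          norm_num
      _ = ENNReal.ofReal (2*(M+1) * r) := by
          rw [ENNReal.ofReal_mul (by positivity : (0:ℝ) ≤ 2*(M+1))]
      _ = ENNReal.ofReal (ε/4) := by
          congr 1
          rw [hr]
          field_simp
          ring
  refine ⟨φ, hφspan, ?_⟩
  have htri : eLpNorm (fun x => g x - φ x) 2 ν ≤
      eLpNorm (g - ⇑fb) 2 ν + eLpNorm (fun x => fb x - φ x) 2 ν := by
    have heq : (fun x => g x - φ x) = (g - ⇑fb) + fun x => fb x - φ x := by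
      funext x; simp only [Pi.sub_apply, Pi.add_apply]; ring
    rw [heq]
    exact eLpNorm_add_le (hg.aestronglyMeasurable.sub hfbAE) (hfbAE.sub hφAE) one_le_two
  have htri2 : eLpNorm (fun x => fb x - φ x) 2 ν ≤
      ENNReal.ofReal (ε/4) + ENNReal.ofReal (ε/4) := by
    calc eLpNorm (fun x => fb x - φ x) 2 ν
        ≤ eLpNorm (K.indicator (fun x => fb x - φ x)) 2 ν +
          eLpNorm (Kᶜ.indicator (fun x => fb x - φ x)) 2 ν := by
          conv_lhs => rw [hsplit]
          exact eLpNorm_add_le ((hfbAE.sub hφAE).indicator hKmeas)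
            ((hfbAE.sub hφAE).indicator hKmeas.compl) one_le_two
      _ ≤ _ := add_le_add estK estKc
  calc eLpNorm (fun x => g x - φ x) 2 ν
      ≤ ENNReal.ofReal (ε/4) + (ENNReal.ofReal (ε/4) + ENNReal.ofReal (ε/4)) :=
        htri.trans (add_le_add hfb htri2)
    _ = ENNReal.ofReal (3*(ε/4)) := by
        rw [← ENNReal.ofReal_add (by linarith) (by linarith),
          ← ENNReal.ofReal_add (by linarith) (by linarith)]
        congr 1
        ring
    _ < ENNReal.ofReal ε := (ENNReal.ofReal_lt_ofReal_iff hε).2 (by linarith)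
end
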